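/- Let P be a formula-based program, α a countable ordinal, and I an interpretation. If I ⊑_α T_P(I), then T^{ω₁}_{P,α}(I) ⊑_{α+1} T_P(T^{ω₁}_{P,α}(I)). -/

import Mathlib

/-!
Infinite-valued semantics for formula-based logic programs
(Rondogiannis–Wadge style), following Lüdecke,
"Every Formula-Based Logic Program Has a Least Infinite-Valued Model".
-/

noncomputable section

namespace ILP

attribute [local instance] Classical.propDecidable

/-- The first uncountable ordinal. -/
def omega1 : Ordinal.{0} := Ordinal.omega 1

lemma omega1_isLimit : Order.IsSuccLimit omega1 := by
  first | exact Ordinal.isSuccLimit_omega 1 | exact Cardinal.isSuccLimit_omega 1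

lemma zero_lt_omega1 : (0 : Ordinal) < omega1 := omega1_isLimit.pos

lemma succ_lt_omega1 {a : Ordinal} (h : a < omega1) : a + 1 < omega1 := by
  rw [Ordinal.add_one_eq_succ]
  exact omega1_isLimit.succ_lt h

/-- Pre-truth-values: `F α`, `0`, `T α` for arbitrary ordinals `α`. -/
inductive TVPre : Type 1 where
  | F : Ordinal → TVPre
  | zero : TVPre
  | T : Ordinal → TVPre

/-- A pre-truth-value is countable if its index is a countable ordinal. -/
def TVPre.countable : TVPre → Prop
  | .F a => a < omega1
  | .zero => True
  | .T a => a < omega1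

/-- The set `W` of truth values:
`F_α` (false values) for countable `α`, `0`, and `T_α` (true values) for countable `α`. -/
def W : Type 1 := {v : TVPre // v.countable}

/-- The strict order on truth values:
`F_0 < F_1 < ... < 0 < ... < T_1 < T_0`. -/
def TVPre.lt : TVPre → TVPre → Prop
  | .F a, .F b => a < b
  | .F _, .zero => True
  | .F _, .T _ => True
  | .zero, .T _ => True
  | .T a, .T b => b < a
  | _, _ => False

instance : LT W := ⟨fun x y => TVPre.lt x.1 y.1⟩

instance : LE W := ⟨fun x y => x = y ∨ x < y⟩

lemma TVPre.lt_trans {a b c : TVPre} (hab : a.lt b) (hbc : b.lt c) : a.lt c := by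
  cases a <;> cases b <;> cases c <;> simp_all [TVPre.lt] <;>
    first | exact hab.trans hbc | exact hbc.trans hab

lemma TVPre.lt_irrefl {a : TVPre} (h : a.lt a) : False := by
  cases a <;> simp_all [TVPre.lt]

instance instLinearOrderW : LinearOrder W where
  le_refl a := Or.inl rfl
  le_trans a b c hab hbc := by
    rcases hab with rfl | hab
    · exact hbc
    rcases hbc with rfl | hbc
    · exact Or.inr hab
    · exact Or.inr (TVPre.lt_trans hab hbc)
  le_antisymm a b hab hba := by
    rcases hab with rfl | hab
    · rfl
    rcases hba with rfl | hba
    · rfl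
    exact absurd (TVPre.lt_trans hab hba) TVPre.lt_irrefl
  le_total a b := by
    obtain ⟨a1, ha⟩ := a
    obtain ⟨b1, hb⟩ := b
    have tri : a1 = b1 ∨ a1.lt b1 ∨ b1.lt a1 := by
      cases a1 <;> cases b1 <;> simp [TVPre.lt] <;> (try rename_i x y) <;>
        (try rcases lt_trichotomy x y with h | h | h) <;> tauto
    rcases tri with h | h | h
    · exact Or.inl (Or.inl (Subtype.ext h))
    · exact Or.inl (Or.inr h)
    · exact Or.inr (Or.inr h)
  lt_iff_le_not_ge a b := by
    constructor
    · intro h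
      refine ⟨Or.inr h, ?_⟩
      rintro (rfl | h')
      · exact TVPre.lt_irrefl h
      · exact TVPre.lt_irrefl (TVPre.lt_trans h h')
    · rintro ⟨rfl | h, h2⟩
      · exact absurd (Or.inl rfl) h2
      · exact h
  toDecidableLE := Classical.decRel _

/-- The false value `F_α`. -/
def WF (a : Ordinal) (h : a < omega1) : W := ⟨.F a, h⟩

/-- The true value `T_α`. -/
def WT (a : Ordinal) (h : a < omega1) : W := ⟨.T a, h⟩

/-- The undefined value `0`. -/
def WZ : W := ⟨.zero, trivial⟩

/-- `deg w < α` : the degree of `w` (which is `∞` for `0`) is less than `α`. -/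
def degLT (w : W) (α : Ordinal) : Prop :=
  match w.1 with
  | .F a => a < α
  | .zero => False
  | .T a => a < α

/-- The set of indices of true values occurring in `M`. -/
def TIdx (M : Set W) : Set Ordinal := {a | ∃ w ∈ M, w.1 = TVPre.T a}

/-- The set of indices of false values occurring in `M`. -/
def FIdx (M : Set W) : Set Ordinal := {a | ∃ w ∈ M, w.1 = TVPre.F a}

lemma mem_lt_omega1_of_TIdx {M : Set W} {a : Ordinal} (h : a ∈ TIdx M) : a < omega1 := by
  obtain ⟨w, _, hw⟩ := h
  have := w.2
  rw [hw] at this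
  exact this

lemma mem_lt_omega1_of_FIdx {M : Set W} {a : Ordinal} (h : a ∈ FIdx M) : a < omega1 := by
  obtain ⟨w, _, hw⟩ := h
  have := w.2
  rw [hw] at this
  exact this

/-- The least upper bound of a subset of `W`. -/
def Wsup (M : Set W) : W :=
  if h : (TIdx M).Nonempty then
    WT (sInf (TIdx M))
      (lt_of_le_of_lt (csInf_le' h.choose_spec) (mem_lt_omega1_of_TIdx h.choose_spec))
  else if WZ ∈ M then WZ
  else if h2 : sSup (FIdx M) < omega1 then WF (sSup (FIdx M)) h2
  else WZ

/-- The greatest lower bound of a subset of `W`. -/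
def Winf (M : Set W) : W :=
  if h : (FIdx M).Nonempty then
    WF (sInf (FIdx M))
      (lt_of_le_of_lt (csInf_le' h.choose_spec) (mem_lt_omega1_of_FIdx h.choose_spec))
  else if WZ ∈ M then WZ
  else if h2 : sSup (TIdx M) < omega1 then WT (sSup (TIdx M)) h2
  else WZ

/-- The semantics of negation on `W`. -/
def Wneg : W → W
  | ⟨.F a, h⟩ => WT (a + 1) (succ_lt_omega1 h)
  | ⟨.zero, _⟩ => WZ
  | ⟨.T a, h⟩ => WF (a + 1) (succ_lt_omega1 h)

/-! ### Syntax -/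

/-- A first-order language with finitely many predicate symbols (at least one),
finitely many function symbols and finitely many constants (at least one). -/
structure Language where
  nPred : ℕ
  predAr : Fin nPred → ℕ
  nFun : ℕ
  funAr : Fin nFun → ℕ
  nConst : ℕ
  npos : 1 ≤ nPred
  cpos : 1 ≤ nConst

variable {L : Language}

/-- Terms of the language; variables are indexed by natural numbers. -/
inductive Term (L : Language) : Type where
  | var : ℕ → Term L
  | const : Fin L.nConst → Term L
  | func : (f : Fin L.nFun) → (Fin (L.funAr f) → Term L) → Term L

/-- A term is ground if it contains no variables. -/
def Term.ground : Term L → Prop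
  | .var _ => False
  | .const _ => True
  | .func _ ts => ∀ i, (ts i).ground

/-- The Herbrand universe: the set of ground terms. -/
def HU (L : Language) : Type := {t : Term L // t.ground}

/-- Formulas of the language. -/
inductive Formula (L : Language) : Type where
  | verum : Formula L
  | falsum : Formula L
  | atom : (p : Fin L.nPred) → (Fin (L.predAr p) → Term L) → Formula L
  | neg : Formula L → Formula L
  | conj : Formula L → Formula L → Formula L
  | disj : Formula L → Formula L → Formula L
  | all : ℕ → Formula L → Formula L
  | ex : ℕ → Formula L → Formula L

/-- A ground atom: a predicate symbol applied to ground terms.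
The Herbrand base `H_B` is the type of ground atoms. -/
structure GroundAtom (L : Language) : Type where
  pred : Fin L.nPred
  args : Fin (L.predAr pred) → HU L

/-- An (infinite-valued Herbrand) interpretation. -/
def Interp (L : Language) : Type 1 := GroundAtom L → W

/-- Evaluation of a term under a variable assignment. -/
def Term.evalT (h : ℕ → HU L) : Term L → HU L
  | .var n => h n
  | .const c => ⟨.const c, trivial⟩
  | .func f ts => ⟨.func f fun i => ((ts i).evalT h).1, fun i => ((ts i).evalT h).2⟩

/-- The infinite-valued semantics of formulas, relative to an interpretation and
a variable assignment. -/
def Formula.eval (I : Interp L) : Formula L → (ℕ → HU L) → W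
  | .verum, _ => WT 0 zero_lt_omega1
  | .falsum, _ => WF 0 zero_lt_omega1
  | .atom p ts, h => I ⟨p, fun i => (ts i).evalT h⟩
  | .neg φ, h => Wneg (φ.eval I h)
  | .conj φ ψ, h => min (φ.eval I h) (ψ.eval I h)
  | .disj φ ψ, h => max (φ.eval I h) (ψ.eval I h)
  | .ex v φ, h => Wsup (Set.range fun u : HU L => φ.eval I (Function.update h v u))
  | .all v φ, h => Winf (Set.range fun u : HU L => φ.eval I (Function.update h v u))

/-- The variables occurring in a term. -/
def Term.vars : Term L → Set ℕ
  | .var n => {n}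
  | .const _ => ∅
  | .func _ ts => ⋃ i, (ts i).vars

/-- The free variables of a formula. -/
def Formula.freeVars : Formula L → Set ℕ
  | .verum => ∅
  | .falsum => ∅
  | .atom _ ts => ⋃ i, (ts i).vars
  | .neg φ => φ.freeVars
  | .conj φ ψ => φ.freeVars ∪ ψ.freeVars
  | .disj φ ψ => φ.freeVars ∪ ψ.freeVars
  | .all v φ => φ.freeVars \ {v}
  | .ex v φ => φ.freeVars \ {v}

/-- Applying a substitution to a term. -/
def Term.subst (σ : ℕ → Term L) : Term L → Term L
  | .var n => σ n
  | .const c => .const c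
  | .func f ts => .func f fun i => (ts i).subst σ

/-- Applying a substitution to a formula (bound variables are not substituted). -/
def Formula.subst (σ : ℕ → Term L) : Formula L → Formula L
  | .verum => .verum
  | .falsum => .falsum
  | .atom p ts => .atom p fun i => (ts i).subst σ
  | .neg φ => .neg (φ.subst σ)
  | .conj φ ψ => .conj (φ.subst σ) (ψ.subst σ)
  | .disj φ ψ => .disj (φ.subst σ) (ψ.subst σ)
  | .all v φ => .all v (φ.subst (Function.update σ v (Term.var v)))
  | .ex v φ => .ex v (φ.subst (Function.update σ v (Term.var v)))

/-- A formula-based rule `A ← φ`: the head is an atom `P(t₁,…,tₛ)`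
(hence distinct from `⊤` and `⊥`) and the body is an arbitrary formula. -/
structure Rule (L : Language) : Type where
  headPred : Fin L.nPred
  headArgs : Fin (L.predAr headPred) → Term L
  body : Formula L

/-- The head of a rule, as an atomic formula. -/
def Rule.headAtom (r : Rule L) : Formula L := .atom r.headPred r.headArgs

/-- A formula-based logic program: a finite set of formula-based rules. -/
structure Program (L : Language) : Type where
  rules : Set (Rule L)
  finite : rules.Finite

/-- The set `P_G` of ground instances of a program `P`: pairs `(Aσ, φσ)` obtained
from a rule `A ← φ` of `P` and a substitution `σ` such that `Aσ` is a ground atom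
and `φσ` has no free variables. -/
def groundInstances (P : Program L) : Set (GroundAtom L × Formula L) :=
  {Aφ | ∃ r ∈ P.rules, ∃ σ : ℕ → Term L,
    (∃ hg : ∀ i, ((r.headArgs i).subst σ).ground,
      Aφ.1 = ⟨r.headPred, fun i => ⟨(r.headArgs i).subst σ, hg i⟩⟩) ∧
    Aφ.2 = r.body.subst σ ∧ (r.body.subst σ).freeVars = ∅}

/-- A default variable assignment (possible since there is at least one constant). -/
def defaultAssignment (L : Language) : ℕ → HU L :=
  fun _ => ⟨.const ⟨0, L.cpos⟩, trivial⟩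

/-- The value of a closed formula (independent of the variable assignment). -/
def Formula.evalClosed (I : Interp L) (φ : Formula L) : W :=
  φ.eval I (defaultAssignment L)

/-- The immediate consequence operator `T_P`. -/
def TP (P : Program L) (I : Interp L) : Interp L :=
  fun A => Wsup {w | ∃ φ : Formula L, (A, φ) ∈ groundInstances P ∧ w = φ.evalClosed I}

/-- `I ∥ F_β` : the set of ground atoms receiving value `F_β` under `I`. -/
def Ifalse (I : Interp L) (β : Ordinal) : Set (GroundAtom L) := {A | (I A).1 = TVPre.F β}

/-- `I ∥ T_β` : the set of ground atoms receiving value `T_β` under `I`. -/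
def Itrue (I : Interp L) (β : Ordinal) : Set (GroundAtom L) := {A | (I A).1 = TVPre.T β}

/-- `I =_α J`. -/
def eqa (α : Ordinal) (I J : Interp L) : Prop :=
  ∀ β ≤ α, Ifalse I β = Ifalse J β ∧ Itrue I β = Itrue J β

/-- `I ⊑_α J`. -/
def sqa (α : Ordinal) (I J : Interp L) : Prop :=
  (∀ β < α, eqa β I J) ∧ Ifalse J α ⊆ Ifalse I α ∧ Itrue I α ⊆ Itrue J α

/-- `I ⊏_α J`. -/
def sqlt (α : Ordinal) (I J : Interp L) : Prop := sqa α I J ∧ ¬ eqa α I J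

/-- `I ⊑_∞ J`. -/
def sqinf (I J : Interp L) : Prop := I = J ∨ ∃ α < omega1, sqlt α I J

/-- `I` satisfies the rule `A ← φ`. -/
def satisfies (I : Interp L) (r : Rule L) : Prop :=
  ∀ h : ℕ → HU L, r.body.eval I h ≤ r.headAtom.eval I h

/-- `I` is a model of `P`. -/
def isModel (I : Interp L) (P : Program L) : Prop := ∀ r ∈ P.rules, satisfies I r

/-- The transfinite iterates `T^β_{P,α}(I)`. -/
def iter (P : Program L) (α : Ordinal) (hα : α < omega1) (I : Interp L)
    (β : Ordinal) : Interp L :=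
  Ordinal.limitRecOn β I (fun _ J => TP P J)
    (fun β _ ih A =>
      if degLT (I A) α then I A
      else if ∃ γ, ∃ hγ : γ < β, (ih γ hγ A).1 = TVPre.T α then WT α hα
      else if ∀ γ, ∀ hγ : γ < β, (ih γ hγ A).1 = TVPre.F α then WF α hα
      else WF (α + 1) (succ_lt_omega1 hα))

/-- The union `⊔_{γ<α} I_γ` of a family of interpretations. -/
def unionInterp (α : Ordinal) (hα : α < omega1) (Ig : ∀ γ, γ < α → Interp L) :
    Interp L := fun A =>
  if h : ∃ ζ, ∃ hζ : ζ < α, ((Ig ζ hζ) A).1 = TVPre.F ζ ∨ ((Ig ζ hζ) A).1 = TVPre.T ζ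
  then Ig h.choose h.choose_spec.choose A
  else WF α hα

/-- The approximants `M_α` of a program `P`. -/
def approx (P : Program L) (α : Ordinal) : Interp L :=
  if hα : α < omega1 then
    if (∀ γ, ∀ _ : γ < α, ∀ ζ, ζ < γ → eqa ζ (approx P ζ) (approx P γ)) ∧
        sqa α (unionInterp α hα fun γ _ => approx P γ)
          (TP P (unionInterp α hα fun γ _ => approx P γ))
    then iter P α hα (unionInterp α hα fun γ _ => approx P γ) omega1
    else fun _ => WF 0 zero_lt_omega1
  else fun _ => WF 0 zero_lt_omega1
termination_by α
decreasing_by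
  all_goals first | assumption | exact lt_trans ‹_› ‹_›

/-- The depth `δ_P` of a program `P`. -/
def depth (P : Program L) : Ordinal :=
  sInf {δ | δ < omega1 ∧ ∀ γ, δ ≤ γ → γ < omega1 →
    Ifalse (approx P γ) γ = ∅ ∧ Itrue (approx P γ) γ = ∅}

/-- The least infinite-valued model `M_P` of a program `P`. -/
def MP (P : Program L) : Interp L := fun A =>
  if degLT (approx P (depth P) A) (depth P) then approx P (depth P) A else WZ

/-! ### Three-valued semantics -/

/-- The three truth values `F < 0 < T`. -/
inductive TV3 : Type where
  | F : TV3
  | Z : TV3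
  | T : TV3
deriving DecidableEq

/-- Numeric coding of the three truth values. -/
def TV3.toNat : TV3 → ℕ
  | .F => 0
  | .Z => 1
  | .T => 2

instance : LinearOrder TV3 :=
  LinearOrder.lift' TV3.toNat (fun a b => by
    cases a <;> cases b <;> simp [TV3.toNat])

/-- A three-valued interpretation. -/
def Interp3 (L : Language) : Type := GroundAtom L → TV3

/-- Supremum of a set of three-valued truth values. -/
def sup3 (S : Set TV3) : TV3 :=
  if TV3.T ∈ S then .T else if TV3.Z ∈ S then .Z else .F

/-- Infimum of a set of three-valued truth values. -/
def inf3 (S : Set TV3) : TV3 :=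
  if TV3.F ∈ S then .F else if TV3.Z ∈ S then .Z else .T

/-- Three-valued negation. -/
def neg3 : TV3 → TV3
  | .F => .T
  | .Z => .Z
  | .T => .F

/-- The three-valued semantics of formulas. -/
def Formula.eval3 (K : Interp3 L) : Formula L → (ℕ → HU L) → TV3
  | .verum, _ => .T
  | .falsum, _ => .F
  | .atom p ts, h => K ⟨p, fun i => (ts i).evalT h⟩
  | .neg φ, h => neg3 (φ.eval3 K h)
  | .conj φ ψ, h => min (φ.eval3 K h) (ψ.eval3 K h)
  | .disj φ ψ, h => max (φ.eval3 K h) (ψ.eval3 K h)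
  | .ex v φ, h => sup3 (Set.range fun u : HU L => φ.eval3 K (Function.update h v u))
  | .all v φ, h => inf3 (Set.range fun u : HU L => φ.eval3 K (Function.update h v u))

/-- Collapsing all false values to `F` and all true values to `T`. -/
def collapse : W → TV3 := fun w =>
  match w.1 with
  | .F _ => .F
  | .zero => .Z
  | .T _ => .T

/-- The collapse of an infinite-valued interpretation. -/
def collapseI (I : Interp L) : Interp3 L := fun A => collapse (I A)

/-- `K` is a three-valued model of `P`. -/
def isModel3 (K : Interp3 L) (P : Program L) : Prop :=
  ∀ r ∈ P.rules, ∀ h : ℕ → HU L, r.body.eval3 K h ≤ r.headAtom.eval3 K h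

/-- The three-valued interpretation `M_{P,3}`. -/
def MP3 (P : Program L) : Interp3 L := collapseI (MP P)

/-- The negation degree of a formula. -/
def Formula.negDeg : Formula L → ℕ
  | .verum => 0
  | .falsum => 0
  | .atom _ _ => 0
  | .neg φ => φ.negDeg + 1
  | .conj φ ψ => max φ.negDeg ψ.negDeg
  | .disj φ ψ => max φ.negDeg ψ.negDeg
  | .all _ φ => φ.negDeg
  | .ex _ φ => φ.negDeg

/-! ### Auxiliary development -/

section Aux

variable {L : Language}

/-- Case eliminator for `W`. -/
lemma W.cases (v : W) :
    (∃ a, ∃ h : a < omega1, v = WF a h) ∨ v = WZ ∨ (∃ a, ∃ h : a < omega1, v = WT a h) := by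
  obtain ⟨x, hx⟩ := v
  cases x with
  | F a => exact Or.inl ⟨a, hx, rfl⟩
  | zero => exact Or.inr (Or.inl rfl)
  | T a => exact Or.inr (Or.inr ⟨a, hx, rfl⟩)

lemma W.ext {v w : W} (h : v.1 = w.1) : v = w := Subtype.ext h

@[simp] lemma WF_val (a : Ordinal) (h : a < omega1) : (WF a h).1 = TVPre.F a := rfl
@[simp] lemma WT_val (a : Ordinal) (h : a < omega1) : (WT a h).1 = TVPre.T a := rfl
@[simp] lemma WZ_val : (WZ).1 = TVPre.zero := rfl

lemma eq_WF_of_val {v : W} {a : Ordinal} (h : v.1 = TVPre.F a) :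
    ∃ ha : a < omega1, v = WF a ha := by
  obtain ⟨x, hx⟩ := v
  cases x <;> simp_all [WF]
  subst h; exact ⟨hx, rfl⟩

lemma eq_WT_of_val {v : W} {a : Ordinal} (h : v.1 = TVPre.T a) :
    ∃ ha : a < omega1, v = WT a ha := by
  obtain ⟨x, hx⟩ := v
  cases x <;> simp_all [WT]
  subst h; exact ⟨hx, rfl⟩

lemma eq_WZ_of_val {v : W} (h : v.1 = TVPre.zero) : v = WZ := by
  exact W.ext h

@[simp] lemma degLT_WF {a α : Ordinal} {h : a < omega1} : degLT (WF a h) α ↔ a < α := Iff.rfl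
@[simp] lemma degLT_WT {a α : Ordinal} {h : a < omega1} : degLT (WT a h) α ↔ a < α := Iff.rfl
@[simp] lemma degLT_WZ {α : Ordinal} : ¬ degLT WZ α := fun h => h

lemma lt_WF {v : W} {a : Ordinal} {ha : a < omega1} (h : v < WF a ha) :
    ∃ b, ∃ hb : b < omega1, b < a ∧ v = WF b hb := by
  obtain ⟨x, hx⟩ := v
  cases x with
  | F b => exact ⟨b, hx, h, rfl⟩
  | zero => exact absurd h (by exact fun h => h)
  | T b => exact absurd h (by exact fun h => h)

lemma WT_lt {v : W} {a : Ordinal} {ha : a < omega1} (h : WT a ha < v) :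
    ∃ b, ∃ hb : b < omega1, b < a ∧ v = WT b hb := by
  obtain ⟨x, hx⟩ := v
  cases x with
  | F b => exact absurd h (by exact fun h => h)
  | zero => exact absurd h (by exact fun h => h)
  | T b => exact ⟨b, hx, h, rfl⟩

lemma le_WF {v : W} {a : Ordinal} {ha : a < omega1} (h : v ≤ WF a ha) :
    ∃ b, ∃ hb : b < omega1, b ≤ a ∧ v = WF b hb := by
  rcases eq_or_lt_of_le h with rfl | h
  · exact ⟨a, ha, le_rfl, rfl⟩
  · obtain ⟨b, hb, hba, rfl⟩ := lt_WF h
    exact ⟨b, hb, hba.le, rfl⟩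

lemma WT_le {v : W} {a : Ordinal} {ha : a < omega1} (h : WT a ha ≤ v) :
    ∃ b, ∃ hb : b < omega1, b ≤ a ∧ v = WT b hb := by
  rcases eq_or_lt_of_le h with h | h
  · exact ⟨a, ha, le_rfl, h.symm⟩
  · obtain ⟨b, hb, hba, rfl⟩ := WT_lt h
    exact ⟨b, hb, hba.le, rfl⟩

/-- The pointwise version of `⊑_α` on truth values:
either equal, or both of degree `≥ α` with `w ≠ F_α` and `v ≠ T_α`. -/
def Rel (α : Ordinal) (v w : W) : Prop :=
  v = w ∨ (¬ degLT v α ∧ ¬ degLT w α ∧ w.1 ≠ TVPre.F α ∧ v.1 ≠ TVPre.T α)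

lemma Rel.refl {α : Ordinal} (v : W) : Rel α v v := Or.inl rfl

lemma Rel.eq_of_degLT {α : Ordinal} {v w : W} (h : Rel α v w)
    (hd : degLT v α ∨ degLT w α) : v = w := by
  rcases h with rfl | ⟨h1, h2, _, _⟩
  · rfl
  · rcases hd with hd | hd
    · exact absurd hd h1
    · exact absurd hd h2

lemma Rel.F {α : Ordinal} {v w : W} (h : Rel α v w) (hw : w.1 = TVPre.F α) :
    v.1 = TVPre.F α := by
  rcases h with rfl | ⟨_, _, h3, _⟩
  · exact hw
  · exact absurd hw h3

lemma Rel.T {α : Ordinal} {v w : W} (h : Rel α v w) (hv : v.1 = TVPre.T α) :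
    w.1 = TVPre.T α := by
  rcases h with rfl | ⟨_, _, _, h4⟩
  · exact hv
  · exact absurd hv h4

lemma Rel.not_degLT_left {α : Ordinal} {v w : W} (h : Rel α v w) (hd : ¬ degLT v α) :
    ¬ degLT w α := fun hw => hd (by rw [h.eq_of_degLT (Or.inr hw)]; exact hw)

lemma Rel.not_degLT_right {α : Ordinal} {v w : W} (h : Rel α v w) (hd : ¬ degLT w α) :
    ¬ degLT v α := fun hv => hd (by rw [← h.eq_of_degLT (Or.inl hv)]; exact hv)

lemma rel_of_clauses {α : Ordinal} {v w : W}
    (h1 : degLT v α ∨ degLT w α → v = w)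
    (h2 : w.1 = TVPre.F α → v.1 = TVPre.F α)
    (h3 : v.1 = TVPre.T α → w.1 = TVPre.T α) : Rel α v w := by
  by_cases he : v = w
  · exact Or.inl he
  · refine Or.inr ⟨fun hd => he (h1 (Or.inl hd)), fun hd => he (h1 (Or.inr hd)), ?_, ?_⟩
    · intro hw
      exact he (W.ext (by rw [h2 hw, hw]))
    · intro hv
      exact he (W.ext (by rw [hv, h3 hv]))

lemma Rel.trans {α : Ordinal} {u v w : W} (h1 : Rel α u v) (h2 : Rel α v w) :
    Rel α u w := by
  rcases h1 with rfl | ⟨a1, a2, a3, a4⟩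
  · exact h2
  rcases h2 with rfl | ⟨b1, b2, b3, b4⟩
  · exact Or.inr ⟨a1, a2, a3, a4⟩
  · exact Or.inr ⟨a1, b2, b3, a4⟩

/-- `sqa` is the pointwise extension of `Rel`. -/
lemma sqa_iff_rel {α : Ordinal} {I J : Interp L} :
    sqa α I J ↔ ∀ A, Rel α (I A) (J A) := by
  constructor
  · rintro ⟨h1, h2, h3⟩ A
    refine rel_of_clauses ?_ (fun h => h2 h) (fun h => h3 h)
    intro hd
    rcases hd with hd | hd
    · rcases W.cases (I A) with ⟨a, ha, hv⟩ | hv | ⟨a, ha, hv⟩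
      · rw [hv] at hd ⊢
        have := ((h1 a hd) a le_rfl).1
        have hA : A ∈ Ifalse I a := by rw [Ifalse, Set.mem_setOf_eq, hv]; rfl
        rw [this] at hA
        exact W.ext (by rw [hA]; rfl)
      · rw [hv] at hd; exact absurd hd degLT_WZ
      · rw [hv] at hd ⊢
        have := ((h1 a hd) a le_rfl).2
        have hA : A ∈ Itrue I a := by rw [Itrue, Set.mem_setOf_eq, hv]; rfl
        rw [this] at hA
        exact W.ext (by rw [hA]; rfl)
    · rcases W.cases (J A) with ⟨a, ha, hv⟩ | hv | ⟨a, ha, hv⟩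
      · rw [hv] at hd ⊢
        have := ((h1 a hd) a le_rfl).1
        have hA : A ∈ Ifalse J a := by rw [Ifalse, Set.mem_setOf_eq, hv]; rfl
        rw [← this] at hA
        exact W.ext (by rw [hA]; rfl)
      · rw [hv] at hd; exact absurd hd degLT_WZ
      · rw [hv] at hd ⊢
        have := ((h1 a hd) a le_rfl).2
        have hA : A ∈ Itrue J a := by rw [Itrue, Set.mem_setOf_eq, hv]; rfl
        rw [← this] at hA
        exact W.ext (by rw [hA]; rfl)
  · intro h
    refine ⟨?_, fun A hA => (h A).F hA, fun A hA => (h A).T hA⟩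
    intro β hβ ζ hζ
    have hζα : ζ < α := lt_of_le_of_lt hζ hβ
    constructor
    · ext A
      constructor
      · intro hA
        have : I A = J A := (h A).eq_of_degLT (Or.inl (by
          obtain ⟨hw, heq⟩ := eq_WF_of_val hA; rw [heq]; exact hζα))
        rwa [Ifalse, Set.mem_setOf_eq, ← this]
      · intro hA
        have : I A = J A := (h A).eq_of_degLT (Or.inr (by
          obtain ⟨hw, heq⟩ := eq_WF_of_val hA; rw [heq]; exact hζα))
        rwa [Ifalse, Set.mem_setOf_eq, this]
    · ext A
      constructor
      · intro hA
        have : I A = J A := (h A).eq_of_degLT (Or.inl (by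
          obtain ⟨hw, heq⟩ := eq_WT_of_val hA; rw [heq]; exact hζα))
        rwa [Itrue, Set.mem_setOf_eq, ← this]
      · intro hA
        have : I A = J A := (h A).eq_of_degLT (Or.inr (by
          obtain ⟨hw, heq⟩ := eq_WT_of_val hA; rw [heq]; exact hζα))
        rwa [Itrue, Set.mem_setOf_eq, this]

end Aux
section Aux2

lemma WT_ne_F {a b : Ordinal} {h : a < omega1} : (WT a h).1 ≠ TVPre.F b := by simp [WT]
lemma WF_ne_T {a b : Ordinal} {h : a < omega1} : (WF a h).1 ≠ TVPre.T b := by simp [WF]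
lemma WZ_ne_F {b : Ordinal} : (WZ).1 ≠ TVPre.F b := by simp [WZ]
lemma WZ_ne_T {b : Ordinal} : (WZ).1 ≠ TVPre.T b := by simp [WZ]
lemma WF_val_F {a b : Ordinal} {h : a < omega1} : (WF a h).1 = TVPre.F b ↔ a = b := by
  simp [WF]
lemma WT_val_T {a b : Ordinal} {h : a < omega1} : (WT a h).1 = TVPre.T b ↔ a = b := by
  simp [WT]

lemma ord_lt_add_one (a : Ordinal) : a < a + 1 := by
  rw [Ordinal.add_one_eq_succ]; exact Order.lt_succ a

lemma rel_neg {α : Ordinal} {v w : W} (h : Rel α v w) : Rel α (Wneg v) (Wneg w) := by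
  rcases h with rfl | ⟨hv, hw, hwF, hvT⟩
  · exact Rel.refl _
  refine rel_of_clauses ?_ ?_ ?_
  · intro hd
    exfalso
    rcases hd with hd | hd
    · rcases W.cases v with ⟨a, ha, rfl⟩ | rfl | ⟨a, ha, rfl⟩
      · exact hv (lt_trans (ord_lt_add_one a) hd)
      · exact hd
      · exact hv (lt_trans (ord_lt_add_one a) hd)
    · rcases W.cases w with ⟨a, ha, rfl⟩ | rfl | ⟨a, ha, rfl⟩
      · exact hw (lt_trans (ord_lt_add_one a) hd)
      · exact hd
      · exact hw (lt_trans (ord_lt_add_one a) hd)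
  · intro hd
    exfalso
    rcases W.cases w with ⟨a, ha, rfl⟩ | rfl | ⟨a, ha, rfl⟩
    · exact WT_ne_F hd
    · exact WZ_ne_F hd
    · rw [show Wneg (WT a ha) = WF (a+1) (succ_lt_omega1 ha) from rfl, WF_val_F] at hd
      exact hw (hd ▸ ord_lt_add_one a)
  · intro hd
    exfalso
    rcases W.cases v with ⟨a, ha, rfl⟩ | rfl | ⟨a, ha, rfl⟩
    · rw [show Wneg (WF a ha) = WT (a+1) (succ_lt_omega1 ha) from rfl, WT_val_T] at hd
      exact hv (hd ▸ ord_lt_add_one a)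
    · exact WZ_ne_T hd
    · exact WF_ne_T hd

private lemma rel_min_aux {α : Ordinal} {u v2 w2 : W} (h2 : Rel α v2 w2) :
    Rel α (min u v2) (min u w2) := by
  rcases h2 with rfl | ⟨hv2, hw2, hw2F, hv2T⟩
  · exact Rel.refl _
  rcases le_total u v2 with huv | huv <;> rcases le_total u w2 with huw | huw
  · rw [min_eq_left huv, min_eq_left huw]; exact Rel.refl _
  · rw [min_eq_left huv, min_eq_right huw]
    rcases eq_or_lt_of_le huw with rfl | hlt
    · exact Rel.refl _
    refine Or.inr ⟨?_, hw2, hw2F, ?_⟩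
    · intro hd
      rcases W.cases u with ⟨a, ha, rfl⟩ | rfl | ⟨a, ha, rfl⟩
      · obtain ⟨b, hb, hba, rfl⟩ := lt_WF hlt
        exact hw2 (lt_trans hba hd)
      · exact hd
      · obtain ⟨b, hb, hba, rfl⟩ := WT_le huv
        exact hv2 (lt_of_le_of_lt hba hd)
    · intro hu
      obtain ⟨ha, rfl⟩ := eq_WT_of_val hu
      obtain ⟨b, hb, hba, rfl⟩ := WT_le huv
      rcases lt_or_eq_of_le hba with h | h
      · exact hv2 h
      · exact hv2T (by rw [WT_val_T]; exact h)
  · rw [min_eq_right huv, min_eq_left huw]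
    rcases eq_or_lt_of_le huv with rfl | hlt
    · exact Rel.refl _
    refine Or.inr ⟨hv2, ?_, ?_, hv2T⟩
    · intro hd
      rcases W.cases u with ⟨a, ha, rfl⟩ | rfl | ⟨a, ha, rfl⟩
      · obtain ⟨b, hb, hba, rfl⟩ := lt_WF hlt
        exact hv2 (lt_trans hba hd)
      · exact hd
      · obtain ⟨b, hb, hba, rfl⟩ := WT_le huw
        exact hw2 (lt_of_le_of_lt hba hd)
    · intro hu
      obtain ⟨ha, heq⟩ := eq_WF_of_val hu
      rw [heq] at hlt
      obtain ⟨b, hb, hba, rfl⟩ := lt_WF hlt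
      exact hv2 hba
  · rw [min_eq_right huv, min_eq_right huw]
    exact Or.inr ⟨hv2, hw2, hw2F, hv2T⟩

lemma rel_min {α : Ordinal} {v1 v2 w1 w2 : W} (h1 : Rel α v1 w1) (h2 : Rel α v2 w2) :
    Rel α (min v1 v2) (min w1 w2) := by
  rcases h1 with rfl | big1
  · exact rel_min_aux h2
  rcases h2 with rfl | big2
  · rw [min_comm v1 v2, min_comm w1 v2]
    exact rel_min_aux (Or.inr big1)
  · obtain ⟨a1, a2, a3, a4⟩ := big1
    obtain ⟨b1, b2, b3, b4⟩ := big2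
    refine Or.inr ⟨?_, ?_, ?_, ?_⟩
    · rcases min_choice v1 v2 with h | h <;> rw [h] <;> assumption
    · rcases min_choice w1 w2 with h | h <;> rw [h] <;> assumption
    · rcases min_choice w1 w2 with h | h <;> rw [h] <;> assumption
    · rcases min_choice v1 v2 with h | h <;> rw [h] <;> assumption

private lemma rel_max_aux {α : Ordinal} {u v2 w2 : W} (h2 : Rel α v2 w2) :
    Rel α (max u v2) (max u w2) := by
  rcases h2 with rfl | ⟨hv2, hw2, hw2F, hv2T⟩
  · exact Rel.refl _
  rcases le_total v2 u with huv | huv <;> rcases le_total w2 u with huw | huw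
  · rw [max_eq_left huv, max_eq_left huw]; exact Rel.refl _
  · rw [max_eq_left huv, max_eq_right huw]
    rcases eq_or_lt_of_le huw with rfl | hlt
    · exact Rel.refl _
    refine Or.inr ⟨?_, hw2, hw2F, ?_⟩
    · intro hd
      rcases W.cases u with ⟨a, ha, rfl⟩ | rfl | ⟨a, ha, rfl⟩
      · obtain ⟨b, hb, hba, heq⟩ := le_WF huv
        exact hv2 (by rw [heq]; exact lt_of_le_of_lt hba hd)
      · exact hd
      · obtain ⟨b, hb, hba, heq⟩ := WT_lt hlt
        exact hw2 (by rw [heq]; exact lt_trans hba hd)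
    · intro hu
      obtain ⟨ha, rfl⟩ := eq_WT_of_val hu
      obtain ⟨b, hb, hba, heq⟩ := WT_lt hlt
      exact hw2 (by rw [heq]; exact lt_of_lt_of_le hba le_rfl)
  · rw [max_eq_right huv, max_eq_left huw]
    rcases eq_or_lt_of_le huv with rfl | hlt
    · exact Rel.refl _
    refine Or.inr ⟨hv2, ?_, ?_, hv2T⟩
    · intro hd
      rcases W.cases u with ⟨a, ha, rfl⟩ | rfl | ⟨a, ha, rfl⟩
      · obtain ⟨b, hb, hba, heq⟩ := le_WF huw
        exact hw2 (by rw [heq]; exact lt_of_le_of_lt hba hd)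
      · exact hd
      · obtain ⟨b, hb, hba, heq⟩ := WT_lt hlt
        exact hv2 (by rw [heq]; exact lt_trans hba hd)
    · intro hu
      obtain ⟨ha, rfl⟩ := eq_WF_of_val hu
      obtain ⟨b, hb, hba, heq⟩ := le_WF huw
      rcases lt_or_eq_of_le hba with h | h
      · exact hw2 (by rw [heq]; exact h)
      · exact hw2F (by rw [heq, WF_val_F]; exact h)
  · rw [max_eq_right huv, max_eq_right huw]
    exact Or.inr ⟨hv2, hw2, hw2F, hv2T⟩

lemma rel_max {α : Ordinal} {v1 v2 w1 w2 : W} (h1 : Rel α v1 w1) (h2 : Rel α v2 w2) :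
    Rel α (max v1 v2) (max w1 w2) := by
  rcases h1 with rfl | big1
  · exact rel_max_aux h2
  rcases h2 with rfl | big2
  · rw [max_comm v1 v2, max_comm w1 v2]
    exact rel_max_aux (Or.inr big1)
  · obtain ⟨a1, a2, a3, a4⟩ := big1
    obtain ⟨b1, b2, b3, b4⟩ := big2
    refine Or.inr ⟨?_, ?_, ?_, ?_⟩
    · rcases max_choice v1 v2 with h | h <;> rw [h] <;> assumption
    · rcases max_choice w1 w2 with h | h <;> rw [h] <;> assumption
    · rcases max_choice w1 w2 with h | h <;> rw [h] <;> assumption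
    · rcases max_choice v1 v2 with h | h <;> rw [h] <;> assumption

end Aux2
section Aux3

variable {α : Ordinal} {M N : Set W}

lemma FIdx_bdd (S : Set W) : BddAbove (FIdx S) :=
  ⟨omega1, fun b hb => (mem_lt_omega1_of_FIdx hb).le⟩

lemma TIdx_bdd (S : Set W) : BddAbove (TIdx S) :=
  ⟨omega1, fun b hb => (mem_lt_omega1_of_TIdx hb).le⟩

lemma le_sSup_FIdx {S : Set W} {b : Ordinal} (h : b ∈ FIdx S) : b ≤ sSup (FIdx S) :=
  le_csSup (FIdx_bdd S) h

lemma le_sSup_TIdx {S : Set W} {b : Ordinal} (h : b ∈ TIdx S) : b ≤ sSup (TIdx S) :=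
  le_csSup (TIdx_bdd S) h

lemma exists_mem_gt {s : Set Ordinal} {c : Ordinal} (h : c < sSup s) : ∃ b ∈ s, c < b := by
  by_contra hc
  push_neg at hc
  exact absurd (csSup_le' hc) (not_le.mpr h)

lemma shape_F {S : Set W} (hT : ¬(TIdx S).Nonempty) (hZ : WZ ∉ S) {v : W} (hv : v ∈ S) :
    ∃ b, b ∈ FIdx S ∧ v.1 = TVPre.F b := by
  rcases W.cases v with ⟨a, ha, rfl⟩ | rfl | ⟨a, ha, rfl⟩
  · exact ⟨a, ⟨WF a ha, hv, rfl⟩, rfl⟩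
  · exact absurd hv hZ
  · exact absurd ⟨a, WT a ha, hv, rfl⟩ hT

lemma shape_T {S : Set W} (hF : ¬(FIdx S).Nonempty) (hZ : WZ ∉ S) {v : W} (hv : v ∈ S) :
    ∃ b, b ∈ TIdx S ∧ v.1 = TVPre.T b := by
  rcases W.cases v with ⟨a, ha, rfl⟩ | rfl | ⟨a, ha, rfl⟩
  · exact absurd ⟨a, WF a ha, hv, rfl⟩ hF
  · exact absurd hv hZ
  · exact ⟨a, ⟨WT a ha, hv, rfl⟩, rfl⟩

section Transfer

variable (hMN : ∀ v ∈ M, ∃ w ∈ N, Rel α v w) (hNM : ∀ w ∈ N, ∃ v ∈ M, Rel α v w)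

include hMN in
lemma tT_mem {b : Ordinal} (hb : b < α) (h : b ∈ TIdx M) : b ∈ TIdx N := by
  obtain ⟨v, hvM, hvb⟩ := h
  obtain ⟨w, hwN, hr⟩ := hMN v hvM
  have he : v = w := hr.eq_of_degLT (Or.inl (by
    obtain ⟨h', heq⟩ := eq_WT_of_val hvb; rw [heq]; exact hb))
  exact ⟨w, hwN, by rw [← he]; exact hvb⟩

include hNM in
lemma tT_mem' {b : Ordinal} (hb : b < α) (h : b ∈ TIdx N) : b ∈ TIdx M := by
  obtain ⟨w, hwN, hwb⟩ := h
  obtain ⟨v, hvM, hr⟩ := hNM w hwN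
  have he : v = w := hr.eq_of_degLT (Or.inr (by
    obtain ⟨h', heq⟩ := eq_WT_of_val hwb; rw [heq]; exact hb))
  exact ⟨v, hvM, by rw [he]; exact hwb⟩

include hMN in
lemma tF_mem {b : Ordinal} (hb : b < α) (h : b ∈ FIdx M) : b ∈ FIdx N := by
  obtain ⟨v, hvM, hvb⟩ := h
  obtain ⟨w, hwN, hr⟩ := hMN v hvM
  have he : v = w := hr.eq_of_degLT (Or.inl (by
    obtain ⟨h', heq⟩ := eq_WF_of_val hvb; rw [heq]; exact hb))
  exact ⟨w, hwN, by rw [← he]; exact hvb⟩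

include hNM in
lemma tF_mem' {b : Ordinal} (hb : b < α) (h : b ∈ FIdx N) : b ∈ FIdx M := by
  obtain ⟨w, hwN, hwb⟩ := h
  obtain ⟨v, hvM, hr⟩ := hNM w hwN
  have he : v = w := hr.eq_of_degLT (Or.inr (by
    obtain ⟨h', heq⟩ := eq_WF_of_val hwb; rw [heq]; exact hb))
  exact ⟨v, hvM, by rw [he]; exact hwb⟩

include hMN in
lemma tTa (h : α ∈ TIdx M) : α ∈ TIdx N := by
  obtain ⟨v, hvM, hvb⟩ := h
  obtain ⟨w, hwN, hr⟩ := hMN v hvM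
  exact ⟨w, hwN, hr.T hvb⟩

include hNM in
lemma tFa (h : α ∈ FIdx N) : α ∈ FIdx M := by
  obtain ⟨w, hwN, hwb⟩ := h
  obtain ⟨v, hvM, hr⟩ := hNM w hwN
  exact ⟨v, hvM, hr.F hwb⟩

include hMN in
lemma push_high {v : W} (hv : v ∈ M) (hd : ¬ degLT v α) :
    ∃ w ∈ N, ¬ degLT w α ∧ (v.1 ≠ TVPre.F α → w.1 ≠ TVPre.F α) ∧
      (v.1 = TVPre.T α → w.1 = TVPre.T α) := by
  obtain ⟨w, hwN, hr⟩ := hMN v hv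
  exact ⟨w, hwN, hr.not_degLT_left hd, fun hvF hwF => hvF (hr.F hwF), fun h => hr.T h⟩

include hNM in
lemma pull_high {w : W} (hw : w ∈ N) (hd : ¬ degLT w α) :
    ∃ v ∈ M, ¬ degLT v α ∧ (w.1 ≠ TVPre.T α → v.1 ≠ TVPre.T α) ∧
      (w.1 = TVPre.F α → v.1 = TVPre.F α) := by
  obtain ⟨v, hvM, hr⟩ := hNM w hw
  exact ⟨v, hvM, hr.not_degLT_right hd, fun hwT hvT => hwT (hr.T hvT), fun h => hr.F h⟩

end Transfer

lemma Wsup_T (h : (TIdx M).Nonempty) :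
    ∃ hs : sInf (TIdx M) < omega1, Wsup M = WT (sInf (TIdx M)) hs := by
  rw [Wsup, dif_pos h]
  exact ⟨_, rfl⟩

lemma Wsup_Z1 (h : ¬(TIdx M).Nonempty) (h2 : WZ ∈ M) : Wsup M = WZ := by
  rw [Wsup, dif_neg h, if_pos h2]

lemma Wsup_F (h : ¬(TIdx M).Nonempty) (h2 : WZ ∉ M) (h3 : sSup (FIdx M) < omega1) :
    Wsup M = WF (sSup (FIdx M)) h3 := by
  rw [Wsup, dif_neg h, if_neg h2, dif_pos h3]

lemma Wsup_Z2 (h : ¬(TIdx M).Nonempty) (h2 : WZ ∉ M) (h3 : ¬ sSup (FIdx M) < omega1) :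
    Wsup M = WZ := by
  rw [Wsup, dif_neg h, if_neg h2, dif_neg h3]

lemma Winf_F (h : (FIdx M).Nonempty) :
    ∃ hs : sInf (FIdx M) < omega1, Winf M = WF (sInf (FIdx M)) hs := by
  rw [Winf, dif_pos h]
  exact ⟨_, rfl⟩

lemma Winf_Z1 (h : ¬(FIdx M).Nonempty) (h2 : WZ ∈ M) : Winf M = WZ := by
  rw [Winf, dif_neg h, if_pos h2]

lemma Winf_T (h : ¬(FIdx M).Nonempty) (h2 : WZ ∉ M) (h3 : sSup (TIdx M) < omega1) :
    Winf M = WT (sSup (TIdx M)) h3 := by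
  rw [Winf, dif_neg h, if_neg h2, dif_pos h3]

lemma Winf_Z2 (h : ¬(FIdx M).Nonempty) (h2 : WZ ∉ M) (h3 : ¬ sSup (TIdx M) < omega1) :
    Winf M = WZ := by
  rw [Winf, dif_neg h, if_neg h2, dif_neg h3]

lemma rel_Wsup (hα : α < omega1)
    (hMN : ∀ v ∈ M, ∃ w ∈ N, Rel α v w) (hNM : ∀ w ∈ N, ∃ v ∈ M, Rel α v w) :
    Rel α (Wsup M) (Wsup N) := by
  classical
  by_cases hTM : (TIdx M).Nonempty
  · -- Wsup M = WT aM
    obtain ⟨haM, heqM⟩ := Wsup_T hTM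
    set aM := sInf (TIdx M) with haMdef
    have haMmem : aM ∈ TIdx M := csInf_mem hTM
    rw [heqM]
    by_cases hTN : (TIdx N).Nonempty
    · obtain ⟨haN, heqN⟩ := Wsup_T hTN
      set aN := sInf (TIdx N) with haNdef
      have haNmem : aN ∈ TIdx N := csInf_mem hTN
      rw [heqN]
      rcases lt_trichotomy aM α with hc | hc | hc
      · have h1 : aM ∈ TIdx N := tT_mem hMN hc haMmem
        have h2 : aN ≤ aM := csInf_le (OrderBot.bddBelow _) h1
        have h3 : aN ∈ TIdx M := tT_mem' hNM (lt_of_le_of_lt h2 hc) haNmem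
        have h4 : aM ≤ aN := csInf_le (OrderBot.bddBelow _) h3
        exact Or.inl (W.ext (by rw [WT_val, WT_val]; exact congrArg TVPre.T (le_antisymm h4 h2)))
      · have h1 : aM ∈ TIdx N := hc ▸ tTa hMN (hc ▸ haMmem)
        have h2 : aN ≤ aM := csInf_le (OrderBot.bddBelow _) h1
        rcases lt_or_eq_of_le h2 with h | h
        · have h3 : aN ∈ TIdx M := tT_mem' hNM (h.trans_le hc.le) haNmem
          exact absurd (csInf_le (OrderBot.bddBelow _) h3) (not_le.mpr h)
        · exact Or.inl (W.ext (by rw [WT_val, WT_val]; exact congrArg TVPre.T h.symm))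
      · refine Or.inr ⟨?_, ?_, WT_ne_F, ?_⟩
        · exact fun hd => absurd hd (not_lt.mpr hc.le)
        · intro hd
          rw [degLT_WT] at hd
          have h3 : aN ∈ TIdx M := tT_mem' hNM hd haNmem
          exact absurd (lt_of_le_of_lt (csInf_le (OrderBot.bddBelow _) h3) hd)
            (not_lt.mpr hc.le)
        · simp only [ne_eq, WT_val_T]
          exact fun h => absurd (h ▸ hc) (lt_irrefl α)
    · -- TIdx N empty
      have hnotlt : ¬ aM < α := fun h => hTN ⟨aM, tT_mem hMN h haMmem⟩
      have hnoteq : aM ≠ α := fun h => hTN ⟨α, tTa hMN (h ▸ haMmem)⟩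
      by_cases hZN : WZ ∈ N
      · rw [Wsup_Z1 hTN hZN]
        exact Or.inr ⟨hnotlt, degLT_WZ, WZ_ne_F, by simp only [ne_eq, WT_val_T]; exact hnoteq⟩
      by_cases hFN : sSup (FIdx N) < omega1
      · rw [Wsup_F hTN hZN hFN]
        obtain ⟨v, hvM, hvval⟩ := haMmem
        obtain ⟨hv1, hveq⟩ := eq_WT_of_val hvval
        have hvd : ¬ degLT v α := by rw [hveq]; exact hnotlt
        obtain ⟨w, hwN, hwd, hwF, _⟩ := push_high hMN hvM hvd
        have hvnF : v.1 ≠ TVPre.F α := by rw [hvval]; simp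
        obtain ⟨b, hbF, hbval⟩ := shape_F hTN hZN hwN
        have hbge : ¬ b < α := by
          intro h; apply hwd
          obtain ⟨h', heq⟩ := eq_WF_of_val hbval; rw [heq]; exact h
        have hbne : b ≠ α := by
          intro h; exact (hwF hvnF) (h ▸ hbval)
        have hsge : α < sSup (FIdx N) :=
          lt_of_lt_of_le (lt_of_le_of_ne (not_lt.mp hbge) (Ne.symm hbne)) (le_sSup_FIdx hbF)
        refine Or.inr ⟨hnotlt, ?_, ?_, by simp only [ne_eq, WT_val_T]; exact hnoteq⟩
        · exact fun hd => absurd (lt_trans hsge hd) (lt_irrefl α)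
        · simp only [ne_eq, WF_val_F]
          exact fun h => absurd (h ▸ hsge) (lt_irrefl α)
      · rw [Wsup_Z2 hTN hZN hFN]
        exact Or.inr ⟨hnotlt, degLT_WZ, WZ_ne_F, by simp only [ne_eq, WT_val_T]; exact hnoteq⟩
  · -- TIdx M empty
    have hTNlow : ∀ b ∈ TIdx N, ¬ b < α := fun b hb hlt => hTM ⟨b, tT_mem' hNM hlt hb⟩
    -- if N is in the F-branch and has an element of degree ≥ α other than F_α,
    -- then its sup exceeds α
    have hNbig : ∀ (hTN : ¬(TIdx N).Nonempty) (hZN : WZ ∉ N) (w : W), w ∈ N →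
        ¬ degLT w α → w.1 ≠ TVPre.F α → α < sSup (FIdx N) := by
      intro hTN hZN w hwN hwd hwF
      obtain ⟨b, hbF, hbval⟩ := shape_F hTN hZN hwN
      have hbge : ¬ b < α := by
        intro h; apply hwd
        obtain ⟨h', heq⟩ := eq_WF_of_val hbval; rw [heq]; exact h
      have hbne : b ≠ α := fun h => hwF (h ▸ hbval)
      exact lt_of_lt_of_le (lt_of_le_of_ne (not_lt.mp hbge) (Ne.symm hbne)) (le_sSup_FIdx hbF)
    by_cases hZM : WZ ∈ M
    · rw [Wsup_Z1 hTM hZM]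
      by_cases hTN : (TIdx N).Nonempty
      · obtain ⟨haN, heqN⟩ := Wsup_T hTN
        rw [heqN]
        exact Or.inr ⟨degLT_WZ, hTNlow _ (csInf_mem hTN), WT_ne_F, WZ_ne_T⟩
      by_cases hZN : WZ ∈ N
      · rw [Wsup_Z1 hTN hZN]; exact Rel.refl _
      by_cases hFN : sSup (FIdx N) < omega1
      · rw [Wsup_F hTN hZN hFN]
        obtain ⟨w, hwN, hwd, hwF, _⟩ := push_high hMN hZM degLT_WZ
        have hsge := hNbig hTN hZN w hwN hwd (hwF WZ_ne_F)
        refine Or.inr ⟨degLT_WZ, ?_, ?_, WZ_ne_T⟩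
        · exact fun hd => absurd (lt_trans hsge hd) (lt_irrefl α)
        · simp only [ne_eq, WF_val_F]
          exact fun h => absurd (h ▸ hsge) (lt_irrefl α)
      · rw [Wsup_Z2 hTN hZN hFN]; exact Rel.refl _
    · -- M consists of false values only
      by_cases hFM : sSup (FIdx M) < omega1
      · rw [Wsup_F hTM hZM hFM]
        rcases lt_trichotomy (sSup (FIdx M)) α with hc | hc | hc
        · -- all of M has degree < α : N must be an exact copy
          have hMlow : ∀ v ∈ M, ∃ b, b ∈ FIdx M ∧ v.1 = TVPre.F b ∧ b < α := by
            intro v hv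
            obtain ⟨b, hbF, hbval⟩ := shape_F hTM hZM hv
            exact ⟨b, hbF, hbval, lt_of_le_of_lt (le_sSup_FIdx hbF) hc⟩
          have hTN : ¬ (TIdx N).Nonempty := by
            rintro ⟨b, w, hwN, hwval⟩
            obtain ⟨v, hvM, hr⟩ := hNM w hwN
            obtain ⟨c, hcF, hcval, hclt⟩ := hMlow v hvM
            have hvw : v = w := hr.eq_of_degLT (Or.inl (by
              obtain ⟨h', heq⟩ := eq_WF_of_val hcval; rw [heq]; exact hclt))
            rw [hvw, hwval] at hcval
            exact absurd hcval (by simp)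
          have hZN : WZ ∉ N := by
            intro hwN
            obtain ⟨v, hvM, hr⟩ := hNM WZ hwN
            obtain ⟨c, hcF, hcval, hclt⟩ := hMlow v hvM
            have hvw : v = WZ := hr.eq_of_degLT (Or.inl (by
              obtain ⟨h', heq⟩ := eq_WF_of_val hcval; rw [heq]; exact hclt))
            rw [hvw] at hcval
            exact WZ_ne_F hcval
          have hFeq : FIdx N = FIdx M := by
            ext b
            constructor
            · rintro ⟨w, hwN, hwval⟩
              obtain ⟨v, hvM, hr⟩ := hNM w hwN
              obtain ⟨c, hcF, hcval, hclt⟩ := hMlow v hvM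
              have hvw : v = w := hr.eq_of_degLT (Or.inl (by
                obtain ⟨h', heq⟩ := eq_WF_of_val hcval; rw [heq]; exact hclt))
              rw [hvw, hwval] at hcval
              rw [TVPre.F.injEq] at hcval
              exact hcval ▸ hcF
            · intro hb
              exact tF_mem hMN (lt_of_le_of_lt (le_sSup_FIdx hb) hc) hb
          have hFN : sSup (FIdx N) < omega1 := by rw [hFeq]; exact hFM
          rw [Wsup_F hTN hZN hFN]
          exact Or.inl (W.ext (by rw [WF_val, WF_val, hFeq]))
        · -- sM = α
          by_cases hTN : (TIdx N).Nonempty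
          · obtain ⟨haN, heqN⟩ := Wsup_T hTN
            rw [heqN]
            refine Or.inr ⟨?_, hTNlow _ (csInf_mem hTN), WT_ne_F, WF_ne_T⟩
            · rw [degLT_WF, hc]; exact lt_irrefl α
          by_cases hZN : WZ ∈ N
          · rw [Wsup_Z1 hTN hZN]
            refine Or.inr ⟨?_, degLT_WZ, WZ_ne_F, WF_ne_T⟩
            · rw [degLT_WF, hc]; exact lt_irrefl α
          by_cases hFN : sSup (FIdx N) < omega1
          · -- sSup (FIdx N) ≥ α, with equality possible
            have hsge : α ≤ sSup (FIdx N) := by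
              refine le_of_forall_lt fun c hcα => ?_
              obtain ⟨b, hbF, hcb⟩ := exists_mem_gt (by rw [hc]; exact hcα)
              rcases lt_or_ge b α with hbα | hbα
              · exact lt_of_lt_of_le hcb (le_sSup_FIdx (tF_mem hMN hbα hbF))
              · obtain ⟨v, hvM, hvval⟩ := hbF
                have hvd : ¬ degLT v α := by
                  intro h
                  obtain ⟨h', heq⟩ := eq_WF_of_val hvval; rw [heq] at h
                  exact absurd h (not_lt.mpr hbα)
                obtain ⟨w, hwN, hwd, _, _⟩ := push_high hMN hvM hvd
                obtain ⟨d, hdF, hdval⟩ := shape_F hTN hZN hwN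
                have hdge : ¬ d < α := by
                  intro h; apply hwd
                  obtain ⟨h', heq⟩ := eq_WF_of_val hdval; rw [heq]; exact h
                exact lt_of_lt_of_le (lt_of_lt_of_le hcα (not_lt.mp hdge)) (le_sSup_FIdx hdF)
            rw [Wsup_F hTN hZN hFN]
            rcases eq_or_lt_of_le hsge with h | h
            · exact Or.inl (W.ext (by rw [WF_val, WF_val, hc, h]))
            · refine Or.inr ⟨?_, ?_, ?_, WF_ne_T⟩
              · rw [degLT_WF, hc]; exact lt_irrefl α
              · exact fun hd => absurd (lt_trans h hd) (lt_irrefl α)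
              · simp only [ne_eq, WF_val_F]
                exact fun he => absurd (he ▸ h) (lt_irrefl α)
          · rw [Wsup_Z2 hTN hZN hFN]
            refine Or.inr ⟨?_, degLT_WZ, WZ_ne_F, WF_ne_T⟩
            · rw [degLT_WF, hc]; exact lt_irrefl α
        · -- sM > α
          have hnotlt : ¬ degLT (WF (sSup (FIdx M)) hFM) α := by
            rw [degLT_WF]; exact not_lt.mpr hc.le
          obtain ⟨b, hbF, hab⟩ := exists_mem_gt hc
          obtain ⟨v, hvM, hvval⟩ := hbF
          have hvd : ¬ degLT v α := by
            intro h
            obtain ⟨h', heq⟩ := eq_WF_of_val hvval; rw [heq] at h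
            exact absurd h (not_lt.mpr hab.le)
          have hvnF : v.1 ≠ TVPre.F α := by
            rw [hvval]
            simp only [ne_eq, TVPre.F.injEq]
            exact fun he => absurd (he ▸ hab) (lt_irrefl α)
          obtain ⟨w, hwN, hwd, hwF, _⟩ := push_high hMN hvM hvd
          by_cases hTN : (TIdx N).Nonempty
          · obtain ⟨haN, heqN⟩ := Wsup_T hTN
            rw [heqN]
            exact Or.inr ⟨hnotlt, hTNlow _ (csInf_mem hTN), WT_ne_F, WF_ne_T⟩
          by_cases hZN : WZ ∈ N
          · rw [Wsup_Z1 hTN hZN]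
            exact Or.inr ⟨hnotlt, degLT_WZ, WZ_ne_F, WF_ne_T⟩
          by_cases hFN : sSup (FIdx N) < omega1
          · rw [Wsup_F hTN hZN hFN]
            have hsge := hNbig hTN hZN w hwN hwd (hwF hvnF)
            refine Or.inr ⟨hnotlt, ?_, ?_, WF_ne_T⟩
            · exact fun hd => absurd (lt_trans hsge hd) (lt_irrefl α)
            · simp only [ne_eq, WF_val_F]
              exact fun he => absurd (he ▸ hsge) (lt_irrefl α)
          · rw [Wsup_Z2 hTN hZN hFN]
            exact Or.inr ⟨hnotlt, degLT_WZ, WZ_ne_F, WF_ne_T⟩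
      · -- FIdx M unbounded
        rw [Wsup_Z2 hTM hZM hFM]
        obtain ⟨b, hbF, hab⟩ := exists_mem_gt (lt_of_lt_of_le hα (not_lt.mp hFM))
        obtain ⟨v, hvM, hvval⟩ := hbF
        have hvd : ¬ degLT v α := by
          intro h
          obtain ⟨h', heq⟩ := eq_WF_of_val hvval; rw [heq] at h
          exact absurd h (not_lt.mpr hab.le)
        have hvnF : v.1 ≠ TVPre.F α := by
          rw [hvval]
          simp only [ne_eq, TVPre.F.injEq]
          exact fun he => absurd (he ▸ hab) (lt_irrefl α)
        obtain ⟨w, hwN, hwd, hwF, _⟩ := push_high hMN hvM hvd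
        by_cases hTN : (TIdx N).Nonempty
        · obtain ⟨haN, heqN⟩ := Wsup_T hTN
          rw [heqN]
          exact Or.inr ⟨degLT_WZ, hTNlow _ (csInf_mem hTN), WT_ne_F, WZ_ne_T⟩
        by_cases hZN : WZ ∈ N
        · rw [Wsup_Z1 hTN hZN]; exact Rel.refl _
        by_cases hFN : sSup (FIdx N) < omega1
        · rw [Wsup_F hTN hZN hFN]
          have hsge := hNbig hTN hZN w hwN hwd (hwF hvnF)
          refine Or.inr ⟨degLT_WZ, ?_, ?_, WZ_ne_T⟩
          · exact fun hd => absurd (lt_trans hsge hd) (lt_irrefl α)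
          · simp only [ne_eq, WF_val_F]
            exact fun he => absurd (he ▸ hsge) (lt_irrefl α)
        · rw [Wsup_Z2 hTN hZN hFN]; exact Rel.refl _

end Aux3
section Aux4

variable {α : Ordinal} {M N : Set W}

lemma WF_ne_Ta {a b : Ordinal} {h : a < omega1} (hne : a ≠ b) :
    (WF a h).1 ≠ TVPre.F b := by simp only [ne_eq, WF_val_F]; exact hne

lemma rel_Winf (hα : α < omega1)
    (hMN : ∀ v ∈ M, ∃ w ∈ N, Rel α v w) (hNM : ∀ w ∈ N, ∃ v ∈ M, Rel α v w) :
    Rel α (Winf M) (Winf N) := by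
  classical
  by_cases hFM : (FIdx M).Nonempty
  · obtain ⟨haM, heqM⟩ := Winf_F hFM
    have haMmem : sInf (FIdx M) ∈ FIdx M := csInf_mem hFM
    rw [heqM]
    by_cases hFN : (FIdx N).Nonempty
    · obtain ⟨haN, heqN⟩ := Winf_F hFN
      have haNmem : sInf (FIdx N) ∈ FIdx N := csInf_mem hFN
      rw [heqN]
      rcases lt_trichotomy (sInf (FIdx M)) α with hc | hc | hc
      · have h1 : sInf (FIdx M) ∈ FIdx N := tF_mem hMN hc haMmem
        have h2 : sInf (FIdx N) ≤ sInf (FIdx M) := csInf_le (OrderBot.bddBelow _) h1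
        have h3 : sInf (FIdx N) ∈ FIdx M := tF_mem' hNM (lt_of_le_of_lt h2 hc) haNmem
        have h4 : sInf (FIdx M) ≤ sInf (FIdx N) := csInf_le (OrderBot.bddBelow _) h3
        exact Or.inl (W.ext (by rw [WF_val, WF_val]; exact congrArg TVPre.F (le_antisymm h4 h2)))
      · rcases lt_trichotomy (sInf (FIdx N)) α with hd | hd | hd
        · have h3 : sInf (FIdx N) ∈ FIdx M := tF_mem' hNM hd haNmem
          have h4 := csInf_le (OrderBot.bddBelow (FIdx M)) h3
          exact absurd (lt_of_le_of_lt h4 hd) (by rw [hc]; exact lt_irrefl α)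
        · exact Or.inl (W.ext (by rw [WF_val, WF_val, hc, hd]))
        · refine Or.inr ⟨by rw [degLT_WF, hc]; exact lt_irrefl α,
            by rw [degLT_WF]; exact not_lt.mpr hd.le,
            WF_ne_Ta (ne_of_gt hd), WF_ne_T⟩
      · rcases lt_trichotomy (sInf (FIdx N)) α with hd | hd | hd
        · have h3 : sInf (FIdx N) ∈ FIdx M := tF_mem' hNM hd haNmem
          have h4 := csInf_le (OrderBot.bddBelow (FIdx M)) h3
          exact absurd (lt_of_le_of_lt h4 hd) (not_lt.mpr hc.le)
        · have h3 : α ∈ FIdx M := tFa hNM (hd ▸ haNmem)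
          have h4 := csInf_le (OrderBot.bddBelow (FIdx M)) h3
          exact absurd h4 (not_le.mpr hc)
        · refine Or.inr ⟨by rw [degLT_WF]; exact not_lt.mpr hc.le,
            by rw [degLT_WF]; exact not_lt.mpr hd.le,
            WF_ne_Ta (ne_of_gt hd), WF_ne_T⟩
    · -- FIdx N empty
      have hnotlt : ¬ degLT (WF (sInf (FIdx M)) haM) α := by
        rw [degLT_WF]
        exact fun h => hFN ⟨sInf (FIdx M), tF_mem hMN h haMmem⟩
      by_cases hZN : WZ ∈ N
      · rw [Winf_Z1 hFN hZN]
        exact Or.inr ⟨hnotlt, degLT_WZ, WZ_ne_F, WF_ne_T⟩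
      by_cases hTN : sSup (TIdx N) < omega1
      · rw [Winf_T hFN hZN hTN]
        obtain ⟨v, hvM, hvval⟩ := haMmem
        have hvd : ¬ degLT v α := by
          intro h
          obtain ⟨h', heq⟩ := eq_WF_of_val hvval; rw [heq] at h
          rw [degLT_WF] at hnotlt
          exact hnotlt h
        obtain ⟨w, hwN, hwd, _, _⟩ := push_high hMN hvM hvd
        obtain ⟨c, hcT, hcval⟩ := shape_T hFN hZN hwN
        have hcge : ¬ c < α := by
          intro h; apply hwd
          obtain ⟨h', heq⟩ := eq_WT_of_val hcval; rw [heq]; exact h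
        have hsge : α ≤ sSup (TIdx N) := le_trans (not_lt.mp hcge) (le_sSup_TIdx hcT)
        refine Or.inr ⟨hnotlt, ?_, WT_ne_F, WF_ne_T⟩
        · rw [degLT_WT]
          exact not_lt.mpr hsge
      · rw [Winf_Z2 hFN hZN hTN]
        exact Or.inr ⟨hnotlt, degLT_WZ, WZ_ne_F, WF_ne_T⟩
  · -- FIdx M empty
    have hFNlow : ∀ b ∈ FIdx N, ¬ b < α := fun b hb h => hFM ⟨b, tF_mem' hNM h hb⟩
    have hFNa : α ∉ FIdx N := fun h => hFM ⟨α, tFa hNM h⟩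
    have hNTbig : ∀ (hFN : ¬(FIdx N).Nonempty) (hZN : WZ ∉ N) (w : W), w ∈ N →
        ¬ degLT w α → α ≤ sSup (TIdx N) := by
      intro hFN hZN w hwN hwd
      obtain ⟨c, hcT, hcval⟩ := shape_T hFN hZN hwN
      have hcge : ¬ c < α := by
        intro h; apply hwd
        obtain ⟨h', heq⟩ := eq_WT_of_val hcval; rw [heq]; exact h
      exact le_trans (not_lt.mp hcge) (le_sSup_TIdx hcT)
    by_cases hZM : WZ ∈ M
    · rw [Winf_Z1 hFM hZM]
      by_cases hFN : (FIdx N).Nonempty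
      · obtain ⟨haN, heqN⟩ := Winf_F hFN
        rw [heqN]
        have haNmem := csInf_mem hFN
        refine Or.inr ⟨degLT_WZ, by rw [degLT_WF]; exact hFNlow _ haNmem, ?_, WZ_ne_T⟩
        · exact WF_ne_Ta (fun h => hFNa (h ▸ haNmem))
      by_cases hZN : WZ ∈ N
      · rw [Winf_Z1 hFN hZN]; exact Rel.refl _
      by_cases hTN : sSup (TIdx N) < omega1
      · rw [Winf_T hFN hZN hTN]
        obtain ⟨w, hwN, hwd, _, _⟩ := push_high hMN hZM degLT_WZ
        refine Or.inr ⟨degLT_WZ, ?_, WT_ne_F, WZ_ne_T⟩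
        · rw [degLT_WT]
          exact not_lt.mpr (hNTbig hFN hZN w hwN hwd)
      · rw [Winf_Z2 hFN hZN hTN]; exact Rel.refl _
    · -- M consists of true values only
      by_cases hTM : sSup (TIdx M) < omega1
      · rw [Winf_T hFM hZM hTM]
        rcases lt_trichotomy (sSup (TIdx M)) α with hc | hc | hc
        · -- all of M has degree < α : N must be an exact copy
          have hMlow : ∀ v ∈ M, ∃ b, b ∈ TIdx M ∧ v.1 = TVPre.T b ∧ b < α := by
            intro v hv
            obtain ⟨b, hbT, hbval⟩ := shape_T hFM hZM hv
            exact ⟨b, hbT, hbval, lt_of_le_of_lt (le_sSup_TIdx hbT) hc⟩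
          have hFN : ¬ (FIdx N).Nonempty := by
            rintro ⟨b, w, hwN, hwval⟩
            obtain ⟨v, hvM, hr⟩ := hNM w hwN
            obtain ⟨c, hcT, hcval, hclt⟩ := hMlow v hvM
            have hvw : v = w := hr.eq_of_degLT (Or.inl (by
              obtain ⟨h', heq⟩ := eq_WT_of_val hcval; rw [heq]; exact hclt))
            rw [hvw, hwval] at hcval
            exact absurd hcval (by simp)
          have hZN : WZ ∉ N := by
            intro hwN
            obtain ⟨v, hvM, hr⟩ := hNM WZ hwN
            obtain ⟨c, hcT, hcval, hclt⟩ := hMlow v hvM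
            have hvw : v = WZ := hr.eq_of_degLT (Or.inl (by
              obtain ⟨h', heq⟩ := eq_WT_of_val hcval; rw [heq]; exact hclt))
            rw [hvw] at hcval
            exact WZ_ne_T hcval
          have hTeq : TIdx N = TIdx M := by
            ext b
            constructor
            · rintro ⟨w, hwN, hwval⟩
              obtain ⟨v, hvM, hr⟩ := hNM w hwN
              obtain ⟨c, hcT, hcval, hclt⟩ := hMlow v hvM
              have hvw : v = w := hr.eq_of_degLT (Or.inl (by
                obtain ⟨h', heq⟩ := eq_WT_of_val hcval; rw [heq]; exact hclt))
              rw [hvw, hwval] at hcval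
              rw [TVPre.T.injEq] at hcval
              exact hcval ▸ hcT
            · intro hb
              exact tT_mem hMN (lt_of_le_of_lt (le_sSup_TIdx hb) hc) hb
          have hTN : sSup (TIdx N) < omega1 := by rw [hTeq]; exact hTM
          rw [Winf_T hFN hZN hTN]
          exact Or.inl (W.ext (by rw [WT_val, WT_val, hTeq]))
        · -- sSup (TIdx M) = α : N must give exactly T_α
          have hMsh : ∀ v ∈ M, ∃ b, b ∈ TIdx M ∧ v.1 = TVPre.T b ∧ b ≤ α := by
            intro v hv
            obtain ⟨b, hbT, hbval⟩ := shape_T hFM hZM hv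
            exact ⟨b, hbT, hbval, hc ▸ le_sSup_TIdx hbT⟩
          have hFN : ¬ (FIdx N).Nonempty := by
            rintro ⟨b, hb⟩
            rcases lt_trichotomy b α with hbα | hbα | hbα
            · exact hFNlow b hb hbα
            · exact hFNa (hbα ▸ hb)
            · obtain ⟨w, hwN, hwval⟩ := hb
              obtain ⟨v, hvM, hr⟩ := hNM w hwN
              obtain ⟨c, hcT, hcval, hcle⟩ := hMsh v hvM
              rcases lt_or_eq_of_le hcle with h | h
              · have hvw : v = w := hr.eq_of_degLT (Or.inl (by
                  obtain ⟨h', heq⟩ := eq_WT_of_val hcval; rw [heq]; exact h))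
                rw [hvw, hwval] at hcval
                exact absurd hcval (by simp)
              · have := hr.T (h ▸ hcval)
                rw [hwval] at this
                exact absurd this (by simp)
          have hZN : WZ ∉ N := by
            intro hwN
            obtain ⟨v, hvM, hr⟩ := hNM WZ hwN
            obtain ⟨c, hcT, hcval, hcle⟩ := hMsh v hvM
            rcases lt_or_eq_of_le hcle with h | h
            · have hvw : v = WZ := hr.eq_of_degLT (Or.inl (by
                obtain ⟨h', heq⟩ := eq_WT_of_val hcval; rw [heq]; exact h))
              rw [hvw] at hcval
              exact WZ_ne_T hcval
            · exact WZ_ne_T (hr.T (h ▸ hcval))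
          have hNle : sSup (TIdx N) ≤ α := by
            refine csSup_le' ?_
            rintro b ⟨w, hwN, hwval⟩
            obtain ⟨v, hvM, hr⟩ := hNM w hwN
            obtain ⟨c, hcT, hcval, hcle⟩ := hMsh v hvM
            rcases lt_or_eq_of_le hcle with h | h
            · have hvw : v = w := hr.eq_of_degLT (Or.inl (by
                obtain ⟨h', heq⟩ := eq_WT_of_val hcval; rw [heq]; exact h))
              rw [hvw, hwval, TVPre.T.injEq] at hcval
              exact hcval ▸ h.le
            · have := hr.T (h ▸ hcval)
              rw [hwval, TVPre.T.injEq] at this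
              exact this ▸ le_rfl
          have hNge : α ≤ sSup (TIdx N) := by
            refine le_of_forall_lt fun c hcα => ?_
            obtain ⟨b, hbT, hcb⟩ := exists_mem_gt (by rw [hc]; exact hcα)
            have hble : b ≤ α := hc ▸ le_sSup_TIdx hbT
            rcases lt_or_eq_of_le hble with h | h
            · exact lt_of_lt_of_le hcb (le_sSup_TIdx (tT_mem hMN h hbT))
            · exact lt_of_lt_of_le hcα (le_sSup_TIdx (tTa hMN (h ▸ hbT)))
          have hTN : sSup (TIdx N) < omega1 := by
            rw [le_antisymm hNle hNge]; exact hα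
          rw [Winf_T hFN hZN hTN]
          exact Or.inl (W.ext (by rw [WT_val, WT_val, hc, le_antisymm hNle hNge]))
        · -- sSup (TIdx M) > α
          have hnotlt : ¬ degLT (WT (sSup (TIdx M)) hTM) α := by
            rw [degLT_WT]; exact not_lt.mpr hc.le
          have hnT : (WT (sSup (TIdx M)) hTM).1 ≠ TVPre.T α := by
            simp only [ne_eq, WT_val_T]
            exact fun h => absurd (h ▸ hc) (lt_irrefl α)
          obtain ⟨b, hbT, hab⟩ := exists_mem_gt hc
          obtain ⟨v, hvM, hvval⟩ := hbT
          have hvd : ¬ degLT v α := by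
            intro h
            obtain ⟨h', heq⟩ := eq_WT_of_val hvval; rw [heq] at h
            exact absurd h (not_lt.mpr hab.le)
          obtain ⟨w, hwN, hwd, _, _⟩ := push_high hMN hvM hvd
          by_cases hFN : (FIdx N).Nonempty
          · obtain ⟨haN, heqN⟩ := Winf_F hFN
            rw [heqN]
            have haNmem := csInf_mem hFN
            refine Or.inr ⟨hnotlt, by rw [degLT_WF]; exact hFNlow _ haNmem, ?_, hnT⟩
            · exact WF_ne_Ta (fun h => hFNa (h ▸ haNmem))
          by_cases hZN : WZ ∈ N
          · rw [Winf_Z1 hFN hZN]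
            exact Or.inr ⟨hnotlt, degLT_WZ, WZ_ne_F, hnT⟩
          by_cases hTN : sSup (TIdx N) < omega1
          · rw [Winf_T hFN hZN hTN]
            refine Or.inr ⟨hnotlt, ?_, WT_ne_F, hnT⟩
            · rw [degLT_WT]
              exact not_lt.mpr (hNTbig hFN hZN w hwN hwd)
          · rw [Winf_Z2 hFN hZN hTN]
            exact Or.inr ⟨hnotlt, degLT_WZ, WZ_ne_F, hnT⟩
      · -- TIdx M unbounded
        rw [Winf_Z2 hFM hZM hTM]
        obtain ⟨b, hbT, hab⟩ := exists_mem_gt (lt_of_lt_of_le hα (not_lt.mp hTM))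
        obtain ⟨v, hvM, hvval⟩ := hbT
        have hvd : ¬ degLT v α := by
          intro h
          obtain ⟨h', heq⟩ := eq_WT_of_val hvval; rw [heq] at h
          exact absurd h (not_lt.mpr hab.le)
        obtain ⟨w, hwN, hwd, _, _⟩ := push_high hMN hvM hvd
        by_cases hFN : (FIdx N).Nonempty
        · obtain ⟨haN, heqN⟩ := Winf_F hFN
          rw [heqN]
          have haNmem := csInf_mem hFN
          refine Or.inr ⟨degLT_WZ, by rw [degLT_WF]; exact hFNlow _ haNmem, ?_, WZ_ne_T⟩
          · exact WF_ne_Ta (fun h => hFNa (h ▸ haNmem))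
        by_cases hZN : WZ ∈ N
        · rw [Winf_Z1 hFN hZN]; exact Rel.refl _
        by_cases hTN : sSup (TIdx N) < omega1
        · rw [Winf_T hFN hZN hTN]
          refine Or.inr ⟨degLT_WZ, ?_, WT_ne_F, WZ_ne_T⟩
          · rw [degLT_WT]
            exact not_lt.mpr (hNTbig hFN hZN w hwN hwd)
        · rw [Winf_Z2 hFN hZN hTN]; exact Rel.refl _

end Aux4
section Aux5

variable {L : Language}

lemma eval_rel {α : Ordinal} (hα : α < omega1) {I J : Interp L}
    (h : ∀ A, Rel α (I A) (J A)) :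
    ∀ (φ : Formula L) (g : ℕ → HU L), Rel α (φ.eval I g) (φ.eval J g) := by
  intro φ
  induction φ with
  | verum => exact fun g => Rel.refl _
  | falsum => exact fun g => Rel.refl _
  | atom p ts => exact fun g => h _
  | neg φ ih => exact fun g => rel_neg (ih g)
  | conj φ ψ ih1 ih2 => exact fun g => rel_min (ih1 g) (ih2 g)
  | disj φ ψ ih1 ih2 => exact fun g => rel_max (ih1 g) (ih2 g)
  | ex v φ ih =>
    intro g
    refine rel_Wsup hα ?_ ?_
    · rintro x ⟨u, rfl⟩
      exact ⟨_, ⟨u, rfl⟩, ih _⟩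
    · rintro y ⟨u, rfl⟩
      exact ⟨_, ⟨u, rfl⟩, ih _⟩
  | all v φ ih =>
    intro g
    refine rel_Winf hα ?_ ?_
    · rintro x ⟨u, rfl⟩
      exact ⟨_, ⟨u, rfl⟩, ih _⟩
    · rintro y ⟨u, rfl⟩
      exact ⟨_, ⟨u, rfl⟩, ih _⟩

lemma TP_rel {α : Ordinal} (hα : α < omega1) (P : Program L) {I J : Interp L}
    (h : ∀ A, Rel α (I A) (J A)) :
    ∀ A, Rel α (TP P I A) (TP P J A) := by
  intro A
  refine rel_Wsup hα ?_ ?_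
  · rintro x ⟨φ, hφ, rfl⟩
    exact ⟨_, ⟨φ, hφ, rfl⟩, eval_rel hα h φ _⟩
  · rintro y ⟨φ, hφ, rfl⟩
    exact ⟨_, ⟨φ, hφ, rfl⟩, eval_rel hα h φ _⟩

/-! Countability of the Herbrand base -/

/-- An injective coding of terms into the natural numbers. -/
def termCode : Term L → ℕ
  | .var n => Nat.pair 0 n
  | .const c => Nat.pair 1 c.val
  | .func f ts => Nat.pair 2 (Nat.pair f.val (Encodable.encode (List.ofFn fun i => termCode (ts i))))

lemma termCode_inj : ∀ (s t : Term L), termCode s = termCode t → s = t := by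
  intro s
  induction s with
  | var n =>
    intro t h
    cases t with
    | var m => simp only [termCode, Nat.pair_eq_pair] at h; rw [h.2]
    | const c => simp [termCode, Nat.pair_eq_pair] at h
    | func f ts => simp [termCode, Nat.pair_eq_pair] at h
  | const c =>
    intro t h
    cases t with
    | var m => simp [termCode, Nat.pair_eq_pair] at h
    | const c' =>
      simp only [termCode, Nat.pair_eq_pair] at h
      rw [Fin.ext h.2]
    | func f ts => simp [termCode, Nat.pair_eq_pair] at h
  | func f ts ih =>
    intro t h
    cases t with
    | var m => simp [termCode, Nat.pair_eq_pair] at h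
    | const c => simp [termCode, Nat.pair_eq_pair] at h
    | func g us =>
      simp only [termCode, Nat.pair_eq_pair, true_and] at h
      obtain ⟨hfg, henc⟩ := h
      have hfg' : f = g := Fin.ext hfg
      subst hfg'
      have hlists := Encodable.encode_injective henc
      have hfun := List.ofFn_injective hlists
      congr 1
      funext i
      exact ih i _ (congrFun hfun i)

instance : Countable (Term L) := ⟨⟨termCode, fun a b h => termCode_inj a b h⟩⟩

instance : Countable (HU L) := Subtype.countable

instance : Countable (GroundAtom L) := by
  have hinj : Function.Injective
      (fun A : GroundAtom L => (⟨A.pred, A.args⟩ : Σ p : Fin L.nPred, (Fin (L.predAr p) → HU L))) := by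
    rintro ⟨p, a⟩ ⟨q, b⟩ h
    simp only at h
    injection h with h1 h2
    subst h1
    rw [heq_iff_eq] at h2
    subst h2
    rfl
  exact hinj.countable

lemma iSup_lt_omega1 {ι : Type} [Countable ι] (f : ι → Ordinal.{0}) (hf : ∀ i, f i < omega1) :
    iSup f < omega1 := by
  have h1 : omega1 = (Cardinal.aleph 1).ord := (Cardinal.ord_aleph 1).symm
  rw [h1] at hf ⊢
  exact Cardinal.iSup_lt_ord_of_isRegular Cardinal.isRegular_aleph_one
    (lt_of_le_of_lt Cardinal.mk_le_aleph0 Cardinal.aleph0_lt_aleph_one) hf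

/-! Unfolding the transfinite iterates -/

variable (P : Program L) {α : Ordinal} (hα : α < omega1) (I : Interp L)

lemma iter_zero : iter P α hα I 0 = I := Ordinal.limitRecOn_zero _ _ _

lemma iter_succ (β : Ordinal) : iter P α hα I (β + 1) = TP P (iter P α hα I β) := by
  rw [Ordinal.add_one_eq_succ]
  exact Ordinal.limitRecOn_succ _ _ _ _

lemma iter_limit (β : Ordinal) (hβ : Order.IsSuccLimit β) (A : GroundAtom L) : iter P α hα I β A =
    if degLT (I A) α then I A
    else if ∃ γ, ∃ _hγ : γ < β, (iter P α hα I γ A).1 = TVPre.T α then WT α hα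
    else if ∀ γ, ∀ _hγ : γ < β, (iter P α hα I γ A).1 = TVPre.F α then WF α hα
    else WF (α + 1) (succ_lt_omega1 hα) := by
  have := Ordinal.limitRecOn_limit (motive := fun _ => Interp L) β I (fun _ J => TP P J)
    (fun β _ ih A =>
      if degLT (I A) α then I A
      else if ∃ γ, ∃ hγ : γ < β, (ih γ hγ A).1 = TVPre.T α then WT α hα
      else if ∀ γ, ∀ hγ : γ < β, (ih γ hγ A).1 = TVPre.F α then WF α hα
      else WF (α + 1) (succ_lt_omega1 hα)) hβ
  exact congrFun this A

end Aux5
section Aux6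

variable {L : Language} (P : Program L) {α : Ordinal} (hα : α < omega1) (I : Interp L)

/-- At limit stages, the iterates are below the limit iterate. -/
lemma hchain_aux {β : Ordinal}
    (hphi1 : ∀ γ', γ' < β → ∀ A, Rel α (I A) (iter P α hα I γ' A))
    (hlim : Order.IsSuccLimit β) (γ : Ordinal) (hγ : γ < β) (A : GroundAtom L) :
    Rel α (iter P α hα I γ A) (iter P α hα I β A) := by
  have hIγ := hphi1 γ hγ A
  rw [iter_limit P hα I β hlim A]
  by_cases hd : degLT (I A) α
  · rw [if_pos hd]
    have he : I A = iter P α hα I γ A := hIγ.eq_of_degLT (Or.inl hd)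
    rw [← he]
    exact Rel.refl _
  · rw [if_neg hd]
    have hnd : ¬ degLT (iter P α hα I γ A) α := fun h =>
      hd (by rw [hIγ.eq_of_degLT (Or.inr h)]; exact h)
    by_cases hT : ∃ γ', ∃ _hγ' : γ' < β, (iter P α hα I γ' A).1 = TVPre.T α
    · rw [if_pos hT]
      refine rel_of_clauses ?_ ?_ ?_
      · intro hdd
        exfalso
        rcases hdd with h | h
        · exact hnd h
        · exact lt_irrefl α h
      · exact fun h => absurd h WT_ne_F
      · exact fun _ => rfl
    · rw [if_neg hT]
      by_cases hF : ∀ γ', ∀ _hγ' : γ' < β, (iter P α hα I γ' A).1 = TVPre.F α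
      · rw [if_pos hF]
        exact Or.inl (W.ext (by rw [hF γ hγ]; rfl))
      · rw [if_neg hF]
        refine Or.inr ⟨hnd, ?_, ?_, ?_⟩
        · exact fun h => absurd h (not_lt.mpr (ord_lt_add_one α).le)
        · exact WF_ne_Ta (ne_of_gt (ord_lt_add_one α))
        · exact fun h => hT ⟨γ, hγ, h⟩

/-- The main induction: the iterates form a `⊑_α`-chain above `I`. -/
lemma iter_phi (hIrel : ∀ A, Rel α (I A) (TP P I A)) : ∀ β,
    (∀ A, Rel α (I A) (iter P α hα I β A)) ∧
    (∀ A, Rel α (iter P α hα I β A) (iter P α hα I (β + 1) A)) := by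
  intro β
  induction β using Ordinal.induction with
  | h β IH =>
  rcases Ordinal.zero_or_succ_or_isSuccLimit β with rfl | ⟨γ, rfl⟩ | hlim
  · constructor
    · intro A; rw [iter_zero]; exact Rel.refl _
    · intro A
      rw [iter_succ, iter_zero]
      exact hIrel A
  · have hγ : γ < Order.succ γ := Order.lt_succ γ
    obtain ⟨ih1, ih2⟩ := IH γ hγ
    constructor
    · intro A
      rw [← Ordinal.add_one_eq_succ]
      exact (ih1 A).trans (ih2 A)
    · intro A
      rw [← Ordinal.add_one_eq_succ,
        show iter P α hα I (γ + 1 + 1) = TP P (iter P α hα I (γ + 1)) from iter_succ P hα I (γ + 1)]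
      have h2 := TP_rel hα P ih2 A
      rw [show TP P (iter P α hα I γ) = iter P α hα I (γ + 1) from (iter_succ P hα I γ).symm] at h2
      exact h2
  · -- limit case
    have hchain : ∀ γ, γ < β → ∀ A,
        Rel α (iter P α hα I γ A) (iter P α hα I β A) :=
      fun γ hγ A => hchain_aux P hα I (fun γ' hγ' A' => (IH γ' hγ').1 A') hlim γ hγ A
    have hstep : ∀ γ, γ < β → ∀ A,
        Rel α (iter P α hα I (γ + 1) A) (TP P (iter P α hα I β) A) := by
      intro γ hγ A
      have h2 := TP_rel hα P (hchain γ hγ) A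
      rw [show TP P (iter P α hα I γ) = iter P α hα I (γ + 1) from (iter_succ P hα I γ).symm] at h2
      exact h2
    have phi1 : ∀ A, Rel α (I A) (iter P α hα I β A) := by
      intro A
      rw [iter_limit P hα I β hlim A]
      by_cases hd : degLT (I A) α
      · rw [if_pos hd]; exact Rel.refl _
      rw [if_neg hd]
      by_cases hT : ∃ γ', ∃ _hγ' : γ' < β, (iter P α hα I γ' A).1 = TVPre.T α
      · rw [if_pos hT]
        refine rel_of_clauses ?_ ?_ ?_
        · intro hdd
          exfalso
          rcases hdd with h | h
          · exact hd h
          · exact lt_irrefl α h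
        · exact fun h => absurd h WT_ne_F
        · exact fun _ => rfl
      · rw [if_neg hT]
        by_cases hF : ∀ γ', ∀ _hγ' : γ' < β, (iter P α hα I γ' A).1 = TVPre.F α
        · rw [if_pos hF]
          have h0 := hF 0 hlim.pos
          rw [iter_zero] at h0
          exact Or.inl (W.ext (by rw [h0]; rfl))
        · rw [if_neg hF]
          refine Or.inr ⟨hd, ?_, ?_, ?_⟩
          · exact fun h => absurd h (not_lt.mpr (ord_lt_add_one α).le)
          · exact WF_ne_Ta (ne_of_gt (ord_lt_add_one α))
          · exact fun h => hT ⟨0, hlim.pos, by rw [iter_zero]; exact h⟩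
    refine ⟨phi1, ?_⟩
    intro A
    rw [show iter P α hα I (β + 1) = TP P (iter P α hα I β) from iter_succ P hα I β]
    rw [iter_limit P hα I β hlim A]
    by_cases hd : degLT (I A) α
    · rw [if_pos hd]
      have h0 := hstep 0 hlim.pos A
      have h1 : iter P α hα I (0 + 1) A = I A := by
        rw [iter_succ, iter_zero]
        exact ((hIrel A).eq_of_degLT (Or.inl hd)).symm
      rw [h1] at h0
      exact h0
    rw [if_neg hd]
    by_cases hT : ∃ γ', ∃ _hγ' : γ' < β, (iter P α hα I γ' A).1 = TVPre.T α
    · rw [if_pos hT]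
      obtain ⟨γ, hγ, hval⟩ := hT
      have hs : (iter P α hα I (γ + 1) A).1 = TVPre.T α := ((IH γ hγ).2 A).T hval
      have h0 := hstep γ hγ A
      have hTP := h0.T hs
      exact Or.inl (W.ext (by rw [WT_val, hTP]))
    · rw [if_neg hT]
      by_cases hF : ∀ γ', ∀ _hγ' : γ' < β, (iter P α hα I γ' A).1 = TVPre.F α
      · rw [if_pos hF]
        have h01 : (0 : Ordinal) + 1 < β := by
          rw [Ordinal.add_one_eq_succ]; exact hlim.succ_lt hlim.pos
        have hs : (iter P α hα I (0 + 1) A).1 = TVPre.F α := hF (0 + 1) h01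
        have h0 := hstep 0 hlim.pos A
        refine rel_of_clauses ?_ (fun _ => rfl) (fun h => absurd h WF_ne_T)
        · intro hdd
          exfalso
          rcases hdd with h | h
          · exact lt_irrefl α h
          · have he := h0.eq_of_degLT (Or.inr h)
            rw [he] at hs
            obtain ⟨h', heq⟩ := eq_WF_of_val hs
            rw [heq] at h
            exact lt_irrefl α h
      · rw [if_neg hF]
        push_neg at hF
        obtain ⟨γ, hγ, hne⟩ := hF
        have hγ1 : γ + 1 < β := by
          rw [Ordinal.add_one_eq_succ]; exact hlim.succ_lt hγ
        have hs1 : (iter P α hα I (γ + 1) A).1 ≠ TVPre.F α :=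
          fun h => hne (((IH γ hγ).2 A).F h)
        have hnd1 : ¬ degLT (iter P α hα I (γ + 1) A) α := by
          intro h
          have he := ((IH (γ + 1) hγ1).1 A).eq_of_degLT (Or.inr h)
          exact hd (by rw [he]; exact h)
        have h0 := hstep γ hγ A
        refine Or.inr ⟨?_, h0.not_degLT_left hnd1, fun h => hs1 (h0.F h), WF_ne_T⟩
        · exact fun h => absurd h (not_lt.mpr (ord_lt_add_one α).le)

/-- The iterates form a `⊑_α`-chain. -/
lemma iter_chain (hIrel : ∀ A, Rel α (I A) (TP P I A)) :
    ∀ δ, ∀ γ ≤ δ, ∀ A, Rel α (iter P α hα I γ A) (iter P α hα I δ A) := by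
  intro δ
  induction δ using Ordinal.induction with
  | h δ IH =>
  intro γ hγ A
  rcases eq_or_lt_of_le hγ with rfl | hγlt
  · exact Rel.refl _
  rcases Ordinal.zero_or_succ_or_isSuccLimit δ with rfl | ⟨δ', rfl⟩ | hlim
  · exact absurd hγlt (not_lt_zero (a := γ))
  · have hγδ' : γ ≤ δ' := Order.lt_succ_iff.mp hγlt
    have h1 := IH δ' (Order.lt_succ δ') γ hγδ' A
    have h2 := (iter_phi P hα I hIrel δ').2 A
    rw [← Ordinal.add_one_eq_succ]
    exact h1.trans h2
  · exact hchain_aux P hα I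
      (fun γ' hγ' A' => (iter_phi P hα I hIrel γ').1 A') hlim γ hγlt A

end Aux6
/-- the `ω₁`-th iterate is a prefixed point at level `α + 1`. -/
theorem iter_omega1_sqa_succ {L : Language} (P : Program L) (α : Ordinal)
    (hα : α < omega1) (I : Interp L) (hI : sqa α I (TP P I)) :
    sqa (α + 1) (iter P α hα I omega1) (TP P (iter P α hα I omega1)) := by
  classical
  have hIrel : ∀ A, Rel α (I A) (TP P I A) := sqa_iff_rel.mp hI
  have phi := iter_phi P hα I hIrel
  have chain := iter_chain P hα I hIrel
  -- a decision point for each ground atom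
  have hdec : ∀ A : GroundAtom L, ∃ g : Ordinal, g < omega1 ∧
      ((∃ δ, δ < omega1 ∧ (iter P α hα I δ A).1 = TVPre.T α) →
        (iter P α hα I g A).1 = TVPre.T α) ∧
      ((∃ δ, δ < omega1 ∧ (iter P α hα I δ A).1 ≠ TVPre.F α) →
        (iter P α hα I g A).1 ≠ TVPre.F α) := by
    intro A
    by_cases h1 : ∃ δ, δ < omega1 ∧ (iter P α hα I δ A).1 = TVPre.T α
    · obtain ⟨d1, hd1, hv1⟩ := h1
      by_cases h2 : ∃ δ, δ < omega1 ∧ (iter P α hα I δ A).1 ≠ TVPre.F α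
      · obtain ⟨d2, hd2, hv2⟩ := h2
        refine ⟨max d1 d2, max_lt hd1 hd2, ?_, ?_⟩
        · exact fun _ => (chain (max d1 d2) d1 (le_max_left _ _) A).T hv1
        · exact fun _ hF => hv2 ((chain (max d1 d2) d2 (le_max_right _ _) A).F hF)
      · exact ⟨d1, hd1, fun _ => (chain d1 d1 le_rfl A).T hv1, fun h => absurd h h2⟩
    · by_cases h2 : ∃ δ, δ < omega1 ∧ (iter P α hα I δ A).1 ≠ TVPre.F α
      · obtain ⟨d2, hd2, hv2⟩ := h2
        exact ⟨d2, hd2, fun h => absurd h h1, fun _ => hv2⟩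
      · exact ⟨0, zero_lt_omega1, fun h => absurd h h1, fun h => absurd h h2⟩
  choose g hg1 hg2 hg3 using hdec
  have hγ0 : (⨆ A, g A) < omega1 := iSup_lt_omega1 g hg1
  set γ0 := ⨆ A, g A with hγ0def
  have gle : ∀ A, g A ≤ γ0 := fun A => Ordinal.le_iSup g A
  have hγ1ω : γ0 + 1 < omega1 := succ_lt_omega1 hγ0
  -- beyond γ0 the level-α behaviour has stabilized
  have key : ∀ γ, γ0 ≤ γ → γ < omega1 → ∀ A,
      ((iter P α hα I γ A).1 = TVPre.T α ↔ (iter P α hα I omega1 A).1 = TVPre.T α) ∧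
      ((iter P α hα I γ A).1 = TVPre.F α ↔ (iter P α hα I omega1 A).1 = TVPre.F α) := by
    intro γ hγ0γ hγω A
    have hNAeq := iter_limit P hα I omega1 omega1_isLimit A
    by_cases hd : degLT (I A) α
    · rw [if_pos hd] at hNAeq
      have he : I A = iter P α hα I γ A := ((phi γ).1 A).eq_of_degLT (Or.inl hd)
      rw [hNAeq, ← he]
      exact ⟨Iff.rfl, Iff.rfl⟩
    · rw [if_neg hd] at hNAeq
      by_cases hT : ∃ δ, ∃ _hδ : δ < omega1, (iter P α hα I δ A).1 = TVPre.T α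
      · rw [if_pos hT] at hNAeq
        obtain ⟨δ, hδ, hval⟩ := hT
        have hgT : (iter P α hα I (g A) A).1 = TVPre.T α := hg2 A ⟨δ, hδ, hval⟩
        have hγT : (iter P α hα I γ A).1 = TVPre.T α :=
          (chain γ (g A) (le_trans (gle A) hγ0γ) A).T hgT
        constructor
        · exact iff_of_true hγT (by rw [hNAeq]; rfl)
        · refine iff_of_false ?_ ?_
          · intro h
            rw [h] at hγT
            exact absurd hγT (by simp)
          · intro h
            rw [hNAeq] at h
            exact WT_ne_F h
      · rw [if_neg hT] at hNAeq
        by_cases hFall : ∀ δ, ∀ _hδ : δ < omega1, (iter P α hα I δ A).1 = TVPre.F α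
        · rw [if_pos hFall] at hNAeq
          constructor
          · refine iff_of_false (fun h => hT ⟨γ, hγω, h⟩) ?_
            intro h
            rw [hNAeq] at h
            exact WF_ne_T h
          · exact iff_of_true (hFall γ hγω) (by rw [hNAeq]; rfl)
        · rw [if_neg hFall] at hNAeq
          push_neg at hFall
          obtain ⟨δ, hδ, hne⟩ := hFall
          have hgF : (iter P α hα I (g A) A).1 ≠ TVPre.F α := hg3 A ⟨δ, hδ, hne⟩
          constructor
          · refine iff_of_false (fun h => hT ⟨γ, hγω, h⟩) ?_
            intro h
            rw [hNAeq] at h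
            exact WF_ne_T h
          · refine iff_of_false ?_ ?_
            · exact fun h => hgF ((chain γ (g A) (le_trans (gle A) hγ0γ) A).F h)
            · intro h
              rw [hNAeq] at h
              exact WF_ne_Ta (ne_of_gt (ord_lt_add_one α)) h
  -- beyond γ0, the iterates also lie above the limit
  have hback : ∀ γ, γ0 ≤ γ → γ < omega1 → ∀ A,
      Rel α (iter P α hα I omega1 A) (iter P α hα I γ A) := by
    intro γ h1 h2 A
    have hc := chain omega1 γ h2.le A
    have hk := key γ h1 h2 A
    refine rel_of_clauses ?_ (fun h => hk.2.mp h) (fun h => hk.1.mpr h)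
    intro hdd
    rcases hdd with h | h
    · exact (hc.eq_of_degLT (Or.inr h)).symm
    · exact (hc.eq_of_degLT (Or.inl h)).symm
  -- both-ways relations between the limit and `T_P` of the limit
  have e1 : ∀ A, Rel α (iter P α hα I γ0 A) (iter P α hα I omega1 A) :=
    fun A => chain omega1 γ0 hγ0.le A
  have e2 : ∀ A, Rel α (iter P α hα I (γ0 + 1) A) (iter P α hα I omega1 A) :=
    fun A => chain omega1 (γ0 + 1) hγ1ω.le A
  have e1' : ∀ A, Rel α (iter P α hα I omega1 A) (iter P α hα I γ0 A) :=
    hback γ0 le_rfl hγ0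
  have e2' : ∀ A, Rel α (iter P α hα I omega1 A) (iter P α hα I (γ0 + 1) A) :=
    hback (γ0 + 1) (ord_lt_add_one γ0).le hγ1ω
  have t1 := TP_rel hα P e1
  have t1' := TP_rel hα P e1'
  rw [show TP P (iter P α hα I γ0) = iter P α hα I (γ0 + 1)
    from (iter_succ P hα I γ0).symm] at t1 t1'
  have relNT : ∀ A, Rel α (iter P α hα I omega1 A) (TP P (iter P α hα I omega1) A) :=
    fun A => (e2' A).trans (t1 A)
  have relTN : ∀ A, Rel α (TP P (iter P α hα I omega1) A) (iter P α hα I omega1 A) :=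
    fun A => (t1' A).trans (e2 A)
  -- assemble `sqa (α+1)`
  refine ⟨?_, ?_, ?_⟩
  · intro β hβ
    have hβα : β ≤ α := by rwa [Ordinal.add_one_eq_succ, Order.lt_succ_iff] at hβ
    intro ζ hζβ
    have hζα : ζ ≤ α := le_trans hζβ hβα
    constructor
    · ext A
      simp only [Ifalse, Set.mem_setOf_eq]
      rcases lt_or_eq_of_le hζα with hlt | rfl
      · constructor
        · intro h
          have hdv : degLT (iter P α hα I omega1 A) α := by
            obtain ⟨h', heq⟩ := eq_WF_of_val h; rw [heq]; exact hlt
          rw [← (relNT A).eq_of_degLT (Or.inl hdv)]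
          exact h
        · intro h
          have hdw : degLT (TP P (iter P α hα I omega1) A) α := by
            obtain ⟨h', heq⟩ := eq_WF_of_val h; rw [heq]; exact hlt
          rw [(relNT A).eq_of_degLT (Or.inr hdw)]
          exact h
      · exact ⟨fun h => (relTN A).F h, fun h => (relNT A).F h⟩
    · ext A
      simp only [Itrue, Set.mem_setOf_eq]
      rcases lt_or_eq_of_le hζα with hlt | rfl
      · constructor
        · intro h
          have hdv : degLT (iter P α hα I omega1 A) α := by
            obtain ⟨h', heq⟩ := eq_WT_of_val h; rw [heq]; exact hlt
          rw [← (relNT A).eq_of_degLT (Or.inl hdv)]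
          exact h
        · intro h
          have hdw : degLT (TP P (iter P α hα I omega1) A) α := by
            obtain ⟨h', heq⟩ := eq_WT_of_val h; rw [heq]; exact hlt
          rw [(relNT A).eq_of_degLT (Or.inr hdw)]
          exact h
      · exact ⟨fun h => (relNT A).T h, fun h => (relTN A).T h⟩
  · intro A h
    have h' : (TP P (iter P α hα I omega1) A).1 = TVPre.F (α + 1) := h
    show (iter P α hα I omega1 A).1 = TVPre.F (α + 1)
    have hNAeq := iter_limit P hα I omega1 omega1_isLimit A
    by_cases hd : degLT (I A) α
    · rw [if_pos hd] at hNAeq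
      have hdN : degLT (iter P α hα I omega1 A) α := by rw [hNAeq]; exact hd
      rw [(relNT A).eq_of_degLT (Or.inl hdN)]
      exact h'
    rw [if_neg hd] at hNAeq
    by_cases hT : ∃ δ, ∃ _hδ : δ < omega1, (iter P α hα I δ A).1 = TVPre.T α
    · rw [if_pos hT] at hNAeq
      have hc : (TP P (iter P α hα I omega1) A).1 = TVPre.T α :=
        (relNT A).T (by rw [hNAeq]; rfl)
      rw [h'] at hc
      exact absurd hc (by simp)
    rw [if_neg hT] at hNAeq
    by_cases hFall : ∀ δ, ∀ _hδ : δ < omega1, (iter P α hα I δ A).1 = TVPre.F α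
    · rw [if_pos hFall] at hNAeq
      have hc : (TP P (iter P α hα I omega1) A).1 = TVPre.F α :=
        (relTN A).F (by rw [hNAeq]; rfl)
      rw [h'] at hc
      rw [TVPre.F.injEq] at hc
      exact absurd hc (ne_of_gt (ord_lt_add_one α))
    · rw [if_neg hFall] at hNAeq
      rw [hNAeq]
      rfl
  · intro A h
    have h' : (iter P α hα I omega1 A).1 = TVPre.T (α + 1) := h
    exfalso
    have hNAeq := iter_limit P hα I omega1 omega1_isLimit A
    by_cases hd : degLT (I A) α
    · rw [if_pos hd] at hNAeq
      rw [hNAeq] at h'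
      obtain ⟨h2, heq⟩ := eq_WT_of_val h'
      rw [heq] at hd
      exact absurd hd (not_lt.mpr (ord_lt_add_one α).le)
    rw [if_neg hd] at hNAeq
    by_cases hT : ∃ δ, ∃ _hδ : δ < omega1, (iter P α hα I δ A).1 = TVPre.T α
    · rw [if_pos hT] at hNAeq
      rw [hNAeq, WT_val_T] at h'
      exact absurd h' (ne_of_lt (ord_lt_add_one α))
    rw [if_neg hT] at hNAeq
    by_cases hFall : ∀ δ, ∀ _hδ : δ < omega1, (iter P α hα I δ A).1 = TVPre.F α
    · rw [if_pos hFall] at hNAeq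
      rw [hNAeq] at h'
      exact WF_ne_T h'
    · rw [if_neg hFall] at hNAeq
      rw [hNAeq] at h'
      exact WF_ne_T h'

end ILP
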